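/- arXiv:2602.14568 — 4 statements merged into one kernel-verified Lean document; each statement's English description precedes it below -/
import Mathlib

section
/- For every real number x with |x| < π/2, tan x = ∑_{n≥0} A_{2n+1} x^{2n+1} / (2n+1)!. -/
open Finset PowerSeries
open scoped NNReal ENNReal

/-- A permutation `σ` of `{1,…,n}` (modeled on `Fin n`, positions 0-indexed) is
up-down alternating if `σ₁ < σ₂ > σ₃ < σ₄ > ⋯` (1-indexed). -/
def IsUpDown {n : ℕ} (σ : Equiv.Perm (Fin n)) : Prop :=
  ∀ (i : ℕ) (h : i + 1 < n),
    if i % 2 = 0 then σ ⟨i, Nat.lt_of_succ_lt h⟩ < σ ⟨i + 1, h⟩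
    else σ ⟨i + 1, h⟩ < σ ⟨i, Nat.lt_of_succ_lt h⟩

/-- The number of up-down alternating permutations of `{1,…,n}`; `A 0 = A 1 = 1`. -/
noncomputable def A (n : ℕ) : ℕ := Nat.card {σ : Equiv.Perm (Fin n) // IsUpDown σ}

lemma A_le_one (n : ℕ) (hn : n ≤ 1) : A n = 1 := by
  have h : ∀ σ : Equiv.Perm (Fin n), IsUpDown σ := by
    intro σ i h; omega
  rw [A, Nat.card_congr (Equiv.subtypeUnivEquiv h)]
  interval_cases n <;> simp [Nat.card_eq_fintype_card]

section Glue
variable {n k : ℕ}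

lemma compl_card (S : Finset (Fin n)) (hS : S.card = k) : Sᶜ.card = n - k := by
  rw [Finset.card_compl, hS, Fintype.card_fin]

def glue (S : Finset (Fin n)) (hS : S.card = k) (u : Equiv.Perm (Fin k))
    (v : Equiv.Perm (Fin (n-k))) (i : Fin (n+1)) : Fin (n+1) :=
  if h : (i : ℕ) < k then (S.orderEmbOfFin hS (u ⟨i, h⟩)).castSucc
  else if h2 : (i : ℕ) = k then Fin.last n
  else (Sᶜ.orderEmbOfFin (compl_card S hS)
    (v ⟨(i:ℕ) - (k+1), by have := i.isLt; omega⟩)).castSucc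

lemma glue_apply_lt (S : Finset (Fin n)) (hS : S.card = k) (u : Equiv.Perm (Fin k))
    (v : Equiv.Perm (Fin (n-k))) (i : Fin (n+1)) (h : (i:ℕ) < k) :
    glue S hS u v i = (S.orderEmbOfFin hS (u ⟨i, h⟩)).castSucc := dif_pos h

lemma glue_apply_eq (S : Finset (Fin n)) (hS : S.card = k) (u : Equiv.Perm (Fin k))
    (v : Equiv.Perm (Fin (n-k))) (i : Fin (n+1)) (h : (i:ℕ) = k) :
    glue S hS u v i = Fin.last n := by
  rw [glue, dif_neg (by omega), dif_pos h]

lemma glue_apply_gt (S : Finset (Fin n)) (hS : S.card = k) (u : Equiv.Perm (Fin k))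
    (v : Equiv.Perm (Fin (n-k))) (i : Fin (n+1)) (h : k < (i:ℕ)) :
    glue S hS u v i = (Sᶜ.orderEmbOfFin (compl_card S hS)
      (v ⟨(i:ℕ) - (k+1), by have := i.isLt; omega⟩)).castSucc := by
  rw [glue, dif_neg (by omega), dif_neg (by omega)]

lemma glue_injective (S : Finset (Fin n)) (hS : S.card = k) (u : Equiv.Perm (Fin k))
    (v : Equiv.Perm (Fin (n-k))) : Function.Injective (glue S hS u v) := by
  intro a b hab
  rcases lt_trichotomy (a:ℕ) k with ha | ha | ha <;>
    rcases lt_trichotomy (b:ℕ) k with hb | hb | hb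
  · rw [glue_apply_lt S hS u v a ha, glue_apply_lt S hS u v b hb] at hab
    have h1 := Fin.castSucc_injective _ hab
    have h2 := (S.orderEmbOfFin hS).injective h1
    have h3 := u.injective h2
    simp only [Fin.mk.injEq] at h3
    exact Fin.ext h3
  · exfalso
    rw [glue_apply_lt S hS u v a ha, glue_apply_eq S hS u v b hb] at hab
    exact absurd hab (Fin.castSucc_lt_last _).ne
  · exfalso
    rw [glue_apply_lt S hS u v a ha, glue_apply_gt S hS u v b hb] at hab
    have h1 := Fin.castSucc_injective _ hab
    have h2 : S.orderEmbOfFin hS (u ⟨a, ha⟩) ∈ Sᶜ := by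
      rw [h1]; exact Finset.orderEmbOfFin_mem _ _ _
    exact absurd (Finset.orderEmbOfFin_mem S hS _) (Finset.mem_compl.mp h2)
  · exfalso
    rw [glue_apply_eq S hS u v a ha, glue_apply_lt S hS u v b hb] at hab
    exact absurd hab.symm (Fin.castSucc_lt_last _).ne
  · exact Fin.ext (ha.trans hb.symm)
  · exfalso
    rw [glue_apply_eq S hS u v a ha, glue_apply_gt S hS u v b hb] at hab
    exact absurd hab.symm (Fin.castSucc_lt_last _).ne
  · exfalso
    rw [glue_apply_gt S hS u v a ha, glue_apply_lt S hS u v b hb] at hab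
    have h1 := Fin.castSucc_injective _ hab
    have h2 : S.orderEmbOfFin hS (u ⟨b, hb⟩) ∈ Sᶜ := by
      rw [← h1]; exact Finset.orderEmbOfFin_mem _ _ _
    exact absurd (Finset.orderEmbOfFin_mem S hS _) (Finset.mem_compl.mp h2)
  · exfalso
    rw [glue_apply_gt S hS u v a ha, glue_apply_eq S hS u v b hb] at hab
    exact absurd hab (Fin.castSucc_lt_last _).ne
  · rw [glue_apply_gt S hS u v a ha, glue_apply_gt S hS u v b hb] at hab
    have h1 := Fin.castSucc_injective _ hab
    have h2 := (Sᶜ.orderEmbOfFin (compl_card S hS)).injective h1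
    have h3 := v.injective h2
    simp only [Fin.mk.injEq] at h3
    exact Fin.ext (by omega)

noncomputable def gluePerm (S : Finset (Fin n)) (hS : S.card = k) (u : Equiv.Perm (Fin k))
    (v : Equiv.Perm (Fin (n-k))) : Equiv.Perm (Fin (n+1)) :=
  Equiv.ofBijective _ ((Finite.injective_iff_bijective).mp (glue_injective S hS u v))

lemma gluePerm_apply (S : Finset (Fin n)) (hS : S.card = k) (u : Equiv.Perm (Fin k))
    (v : Equiv.Perm (Fin (n-k))) (i : Fin (n+1)) :
    gluePerm S hS u v i = glue S hS u v i := rfl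

end Glue

section UD
variable {n k : ℕ}

lemma glue_apply_lt' (S : Finset (Fin n)) (hS : S.card = k) (u : Equiv.Perm (Fin k))
    (v : Equiv.Perm (Fin (n-k))) (i : ℕ) (hi : i < n+1) (h : i < k) :
    glue S hS u v ⟨i, hi⟩ = (S.orderEmbOfFin hS (u ⟨i, h⟩)).castSucc := dif_pos h

lemma glue_apply_eq' (S : Finset (Fin n)) (hS : S.card = k) (u : Equiv.Perm (Fin k))
    (v : Equiv.Perm (Fin (n-k))) (i : ℕ) (hi : i < n+1) (h : i = k) :
    glue S hS u v ⟨i, hi⟩ = Fin.last n := by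
  rw [glue, dif_neg (show ¬(i < k) by omega), dif_pos h]

lemma glue_apply_gt' (S : Finset (Fin n)) (hS : S.card = k) (u : Equiv.Perm (Fin k))
    (v : Equiv.Perm (Fin (n-k))) (i : ℕ) (hi : i < n+1) (h : k < i) :
    glue S hS u v ⟨i, hi⟩ = (Sᶜ.orderEmbOfFin (compl_card S hS)
      (v ⟨i - (k+1), show i - (k+1) < n - k by omega⟩)).castSucc := by
  rw [glue, dif_neg (show ¬(i < k) by omega), dif_neg (show ¬(i = k) by omega)]

lemma isUpDown_gluePerm_iff (hk : Odd k) (hkn : k ≤ n) (S : Finset (Fin n)) (hS : S.card = k)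
    (u : Equiv.Perm (Fin k)) (v : Equiv.Perm (Fin (n-k))) :
    IsUpDown (gluePerm S hS u v) ↔ IsUpDown u ∧ IsUpDown v := by
  have hk2 := Nat.odd_iff.mp hk
  have emb1 : ∀ x y : Fin k, (S.orderEmbOfFin hS x).castSucc < (S.orderEmbOfFin hS y).castSucc ↔ x < y :=
    fun x y => by rw [Fin.castSucc_lt_castSucc_iff, OrderEmbedding.lt_iff_lt]
  have emb2 : ∀ x y : Fin (n-k), (Sᶜ.orderEmbOfFin (compl_card S hS) x).castSucc
      < (Sᶜ.orderEmbOfFin (compl_card S hS) y).castSucc ↔ x < y :=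
    fun x y => by rw [Fin.castSucc_lt_castSucc_iff, OrderEmbedding.lt_iff_lt]
  constructor
  · intro hg
    constructor
    · intro i h
      have hg1 := hg i (by omega)
      rw [gluePerm_apply, gluePerm_apply, glue_apply_lt' S hS u v i (by omega) (by omega),
        glue_apply_lt' S hS u v (i+1) (by omega) h] at hg1
      by_cases hi : i % 2 = 0
      · rw [if_pos hi] at hg1 ⊢
        have := (emb1 _ _).mp hg1
        convert this using 2 <;> exact Fin.ext rfl
      · rw [if_neg hi] at hg1 ⊢
        have := (emb1 _ _).mp hg1
        convert this using 2 <;> exact Fin.ext rfl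
    · intro i h
      have hg1 := hg (k+1+i) (by omega)
      rw [gluePerm_apply, gluePerm_apply, glue_apply_gt' S hS u v (k+1+i) (by omega) (by omega),
        glue_apply_gt' S hS u v (k+1+i+1) (by omega) (by omega)] at hg1
      rw [show (k+1+i) % 2 = i % 2 by omega] at hg1
      have e1 : (⟨k+1+i - (k+1), show k+1+i-(k+1) < n-k by omega⟩ : Fin (n-k)) = ⟨i, by omega⟩ :=
        Fin.ext (show k+1+i-(k+1) = i by omega)
      have e2 : (⟨k+1+i+1 - (k+1), show k+1+i+1-(k+1) < n-k by omega⟩ : Fin (n-k)) = ⟨i+1, h⟩ :=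
        Fin.ext (show k+1+i+1-(k+1) = i+1 by omega)
      rw [e1, e2] at hg1
      by_cases hi : i % 2 = 0
      · rw [if_pos hi] at hg1 ⊢
        have := (emb2 _ _).mp hg1
        convert this using 2 <;> exact Fin.ext rfl
      · rw [if_neg hi] at hg1 ⊢
        have := (emb2 _ _).mp hg1
        convert this using 2 <;> exact Fin.ext rfl
  · rintro ⟨hu, hv⟩ i h
    rcases lt_trichotomy (i+1) k with hik | hik | hik
    · have hu1 := hu i hik
      rw [gluePerm_apply, gluePerm_apply, glue_apply_lt' S hS u v i (by omega) (by omega),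
        glue_apply_lt' S hS u v (i+1) (by omega) hik]
      by_cases hi : i % 2 = 0
      · rw [if_pos hi] at hu1 ⊢
        have := (emb1 (u ⟨i, by omega⟩) (u ⟨i+1, hik⟩)).mpr ?_
        · convert this using 2
        · convert hu1 using 2 <;> exact Fin.ext rfl
      · rw [if_neg hi] at hu1 ⊢
        have := (emb1 (u ⟨i+1, hik⟩) (u ⟨i, by omega⟩)).mpr ?_
        · convert this using 2
        · convert hu1 using 2 <;> exact Fin.ext rfl
    · have hi : i % 2 = 0 := by omega
      rw [if_pos hi, gluePerm_apply, gluePerm_apply,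
        glue_apply_lt' S hS u v i (by omega) (by omega),
        glue_apply_eq' S hS u v (i+1) (by omega) hik]
      exact Fin.castSucc_lt_last _
    · rcases Nat.eq_or_lt_of_le hik with hik2 | hik2
      · have hi : ¬ (i % 2 = 0) := by omega
        rw [if_neg hi, gluePerm_apply, gluePerm_apply,
          glue_apply_eq' S hS u v i (by omega) (by omega),
          glue_apply_gt' S hS u v (i+1) (by omega) (by omega)]
        exact Fin.castSucc_lt_last _
      · have hv1 := hv (i - (k+1)) (by omega)
        rw [show (i - (k+1)) % 2 = i % 2 by omega] at hv1
        rw [gluePerm_apply, gluePerm_apply,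
          glue_apply_gt' S hS u v i (by omega) (by omega),
          glue_apply_gt' S hS u v (i+1) (by omega) (by omega)]
        have e1 : (⟨i - (k+1), by omega⟩ : Fin (n-k)) = ⟨i - (k+1), by omega⟩ := rfl
        have e2 : (⟨i+1 - (k+1), show i+1-(k+1) < n-k by omega⟩ : Fin (n-k)) = ⟨i - (k+1) + 1, by omega⟩ :=
          Fin.ext (show i+1-(k+1) = i-(k+1)+1 by omega)
        rw [e2]
        by_cases hi : i % 2 = 0
        · rw [if_pos hi] at hv1 ⊢
          exact (emb2 _ _).mpr hv1
        · rw [if_neg hi] at hv1 ⊢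
          exact (emb2 _ _).mpr hv1

end UD

section Recon
variable {n k : ℕ}

lemma glue_param_inj {S S' : Finset (Fin n)} {hS : S.card = k} {hS' : S'.card = k}
    {u u' : Equiv.Perm (Fin k)} {v v' : Equiv.Perm (Fin (n-k))} (hkn : k ≤ n)
    (hfun : ∀ i, glue S hS u v i = glue S' hS' u' v' i) : S = S' ∧ u = u' ∧ v = v' := by
  have hu_pt : ∀ x : Fin k, S.orderEmbOfFin hS (u x) = S'.orderEmbOfFin hS' (u' x) := by
    intro x
    have h := hfun ⟨x, by omega⟩
    rw [glue_apply_lt' S hS u v x (by omega) x.isLt,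
      glue_apply_lt' S' hS' u' v' x (by omega) x.isLt] at h
    exact Fin.castSucc_injective _ h
  have hv_pt : ∀ x : Fin (n-k), Sᶜ.orderEmbOfFin (compl_card S hS) (v x)
      = S'ᶜ.orderEmbOfFin (compl_card S' hS') (v' x) := by
    intro x
    have h := hfun ⟨k+1+x, by omega⟩
    rw [glue_apply_gt' S hS u v (k+1+x) (by omega) (by omega),
      glue_apply_gt' S' hS' u' v' (k+1+x) (by omega) (by omega)] at h
    have h2 := Fin.castSucc_injective _ h
    have e : (⟨k+1+(x:ℕ) - (k+1), show k+1+(x:ℕ)-(k+1) < n-k by omega⟩ : Fin (n-k)) = x :=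
      Fin.ext (show k+1+(x:ℕ)-(k+1) = (x:ℕ) by omega)
    rwa [e] at h2
  have hSS : S = S' := by
    ext y
    constructor
    · intro hy
      have hy2 : y ∈ Set.range (S.orderEmbOfFin hS) := by
        rw [Finset.range_orderEmbOfFin]; exact hy
      obtain ⟨z, hz⟩ := hy2
      rw [← hz, ← Equiv.apply_symm_apply u z, hu_pt]
      exact Finset.orderEmbOfFin_mem _ _ _
    · intro hy
      have hy2 : y ∈ Set.range (S'.orderEmbOfFin hS') := by
        rw [Finset.range_orderEmbOfFin]; exact hy
      obtain ⟨z, hz⟩ := hy2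
      rw [← hz, ← Equiv.apply_symm_apply u' z, ← hu_pt]
      exact Finset.orderEmbOfFin_mem _ _ _
  subst hSS
  refine ⟨rfl, ?_, ?_⟩
  · refine Equiv.ext fun x => (S.orderEmbOfFin hS).injective ?_
    exact (hu_pt x).trans (by congr 1)
  · refine Equiv.ext fun x => (Sᶜ.orderEmbOfFin (compl_card S hS)).injective ?_
    exact (hv_pt x).trans (by congr 1)

lemma glue_surj (hkn : k ≤ n) (σ : Equiv.Perm (Fin (n+1))) (hσ : σ ⟨k, by omega⟩ = Fin.last n) :
    ∃ (S : Finset (Fin n)) (hS : S.card = k) (u : Equiv.Perm (Fin k))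
      (v : Equiv.Perm (Fin (n-k))), ∀ i, glue S hS u v i = σ i := by
  classical
  have hne : ∀ (j : ℕ) (hj : j < n+1), j ≠ k → σ ⟨j, hj⟩ ≠ Fin.last n := by
    intro j hj hjk hcon
    exact hjk (by
      have := σ.injective (hcon.trans hσ.symm)
      exact congrArg Fin.val this)
  -- left part
  set g : Fin k → Fin n := fun x => (σ ⟨x, by omega⟩).castPred (hne x (by omega) (by omega)) with hg
  have hginj : Function.Injective g := by
    intro a b hab
    rw [hg] at hab
    have h2 : (σ ⟨(a:ℕ), by omega⟩ : Fin (n+1)) = σ ⟨(b:ℕ), by omega⟩ := by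
      have h3 := congrArg Fin.castSucc hab
      rwa [Fin.castSucc_castPred, Fin.castSucc_castPred] at h3
    have := σ.injective h2
    simp only [Fin.mk.injEq] at this
    exact Fin.ext this
  have hcu : ∀ (s : Finset (Fin n)) (m : ℕ) (h : s.card = m) (x : Fin n) (hx : x ∈ s),
      s.orderEmbOfFin h ((s.orderIsoOfFin h).symm ⟨x, hx⟩) = x := by
    intro s m h x hx
    rw [← Finset.coe_orderIsoOfFin_apply, OrderIso.apply_symm_apply]
  set S : Finset (Fin n) := Finset.image g Finset.univ with hSdef
  have hS : S.card = k := by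
    rw [hSdef, Finset.card_image_of_injective _ hginj, Finset.card_univ, Fintype.card_fin]
  have hmemS : ∀ x : Fin k, g x ∈ S := fun x => Finset.mem_image_of_mem g (Finset.mem_univ x)
  set uf : Fin k → Fin k := fun x => (S.orderIsoOfFin hS).symm ⟨g x, hmemS x⟩ with huf
  have hufinj : Function.Injective uf := by
    intro a b hab
    rw [huf] at hab
    have h1 := (S.orderIsoOfFin hS).symm.injective hab
    exact hginj (congrArg Subtype.val h1)
  set u : Equiv.Perm (Fin k) := Equiv.ofBijective uf (Finite.injective_iff_bijective.mp hufinj) with hu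
  set g2 : Fin (n-k) → Fin n := fun j => (σ ⟨k+1+(j:ℕ), by omega⟩).castPred
    (hne _ _ (by omega)) with hg2
  have hg2inj : Function.Injective g2 := by
    intro a b hab
    rw [hg2] at hab
    have h2 : (σ ⟨k+1+(a:ℕ), by omega⟩ : Fin (n+1)) = σ ⟨k+1+(b:ℕ), by omega⟩ := by
      have h3 := congrArg Fin.castSucc hab
      rwa [Fin.castSucc_castPred, Fin.castSucc_castPred] at h3
    have h4 := σ.injective h2
    simp only [Fin.mk.injEq] at h4
    exact Fin.ext (by omega)
  set S2 : Finset (Fin n) := Finset.image g2 Finset.univ with hS2def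
  have hS2card : S2.card = n - k := by
    rw [hS2def, Finset.card_image_of_injective _ hg2inj, Finset.card_univ, Fintype.card_fin]
  have hS2 : S2 = Sᶜ := by
    apply Finset.eq_of_subset_of_card_le
    · intro y hy
      rw [Finset.mem_compl]
      intro hyS
      rw [hSdef, Finset.mem_image] at hyS
      rw [hS2def, Finset.mem_image] at hy
      obtain ⟨x1, _, hx1⟩ := hyS
      obtain ⟨x2, _, hx2⟩ := hy
      have h1 : g x1 = g2 x2 := hx1.trans hx2.symm
      rw [hg, hg2] at h1
      have h2 : (σ ⟨(x1:ℕ), by omega⟩ : Fin (n+1)) = σ ⟨k+1+(x2:ℕ), by omega⟩ := by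
        have h3 := congrArg Fin.castSucc h1
        rwa [Fin.castSucc_castPred, Fin.castSucc_castPred] at h3
      have h4 := σ.injective h2
      simp only [Fin.mk.injEq] at h4
      have := x1.isLt
      omega
    · rw [compl_card S hS, hS2card]
  have hmemS2 : ∀ x : Fin (n-k), g2 x ∈ Sᶜ := fun x =>
    hS2 ▸ Finset.mem_image_of_mem g2 (Finset.mem_univ x)
  set vf : Fin (n-k) → Fin (n-k) :=
    fun x => (Sᶜ.orderIsoOfFin (compl_card S hS)).symm ⟨g2 x, hmemS2 x⟩ with hvf
  have hvfinj : Function.Injective vf := by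
    intro a b hab
    rw [hvf] at hab
    have h1 := (Sᶜ.orderIsoOfFin (compl_card S hS)).symm.injective hab
    exact hg2inj (congrArg Subtype.val h1)
  set v : Equiv.Perm (Fin (n-k)) :=
    Equiv.ofBijective vf (Finite.injective_iff_bijective.mp hvfinj) with hv
  refine ⟨S, hS, u, v, ?_⟩
  rintro ⟨ival, hival⟩
  rcases lt_trichotomy ival k with hik | hik | hik
  · rw [glue_apply_lt' S hS u v ival hival hik]
    simp only [hu, Equiv.ofBijective_apply, huf]
    rw [hcu S k hS _ (hmemS _)]
    simp only [hg]
    exact Fin.castSucc_castPred _ _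
  · rw [glue_apply_eq' S hS u v ival hival hik]
    rw [show (⟨ival, hival⟩ : Fin (n+1)) = ⟨k, by omega⟩ from Fin.ext hik]
    exact hσ.symm
  · rw [glue_apply_gt' S hS u v ival hival hik]
    simp only [hv, Equiv.ofBijective_apply, hvf]
    rw [hcu Sᶜ (n-k) (compl_card S hS) _ (hmemS2 _)]
    simp only [hg2]
    have e3 : (⟨k+1+(ival-(k+1)), show k+1+(ival-(k+1)) < n+1 by omega⟩ : Fin (n+1)) = ⟨ival, hival⟩ :=
      Fin.ext (show k+1+(ival-(k+1)) = ival by omega)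
    rw [Fin.castSucc_castPred]
    exact congrArg σ e3
end Recon

section Count
open Finset
variable {n : ℕ}

lemma card_fiber_even (hn : 1 ≤ n) (p : Fin (n+1)) (hp : ¬ Odd (p:ℕ)) :
    Nat.card {σ : Equiv.Perm (Fin (n+1)) // IsUpDown σ ∧ σ p = Fin.last n} = 0 := by
  have hemp : IsEmpty {σ : Equiv.Perm (Fin (n+1)) // IsUpDown σ ∧ σ p = Fin.last n} := by
    constructor
    rintro ⟨σ, hud, hlast⟩
    have hp2 : (p:ℕ) % 2 = 0 := Nat.not_odd_iff.mp hp
    rcases lt_or_eq_of_le (Nat.lt_succ_iff.mp p.isLt) with hpn | hpn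
    · have h := hud (p:ℕ) (by omega)
      rw [if_pos hp2] at h
      simp only [Fin.eta] at h
      rw [hlast] at h
      exact absurd h (not_lt.mpr (Fin.le_last _))
    · have h := hud (n-1) (by omega)
      rw [if_neg (show ¬((n-1) % 2 = 0) by omega)] at h
      have he : (⟨n-1+1, by omega⟩ : Fin (n+1)) = p := Fin.ext (show n-1+1 = (p:ℕ) by omega)
      rw [he, hlast] at h
      exact absurd h (not_lt.mpr (Fin.le_last _))
  exact Nat.card_of_isEmpty

lemma card_fiber_odd (p : Fin (n+1)) (hp : Odd (p:ℕ)) :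
    Nat.card {σ : Equiv.Perm (Fin (n+1)) // IsUpDown σ ∧ σ p = Fin.last n}
      = n.choose (p:ℕ) * A (p:ℕ) * A (n-(p:ℕ)) := by
  set k := (p:ℕ) with hkdef
  have hkn : k ≤ n := by have := p.isLt; omega
  have hpmk : p = ⟨k, by omega⟩ := Fin.ext rfl
  let W := {S : Finset (Fin n) // S.card = k} ×
    ({u : Equiv.Perm (Fin k) // IsUpDown u} × {v : Equiv.Perm (Fin (n-k)) // IsUpDown v})
  let Φ : W → {σ : Equiv.Perm (Fin (n+1)) // IsUpDown σ ∧ σ p = Fin.last n} := fun w =>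
    ⟨gluePerm w.1.1 w.1.2 w.2.1.1 w.2.2.1,
      (isUpDown_gluePerm_iff hp hkn _ _ _ _).mpr ⟨w.2.1.2, w.2.2.2⟩,
      by rw [hpmk, gluePerm_apply, glue_apply_eq' _ _ _ _ k (by omega) rfl]⟩
  have hΦbij : Function.Bijective Φ := by
    constructor
    · rintro ⟨⟨S,hS⟩,⟨u,hu⟩,⟨v,hv⟩⟩ ⟨⟨S',hS'⟩,⟨u',hu'⟩,⟨v',hv'⟩⟩ hEq
      have h0 : gluePerm S hS u v = gluePerm S' hS' u' v' := congrArg Subtype.val hEq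
      have h1 : ∀ i, glue S hS u v i = glue S' hS' u' v' i := fun i => Equiv.ext_iff.mp h0 i
      obtain ⟨h2, h3, h4⟩ := glue_param_inj hkn h1
      subst h2
      refine Prod.ext (Subtype.ext rfl) (Prod.ext (Subtype.ext h3) (Subtype.ext h4))
    · rintro ⟨σ, hud, hlast⟩
      obtain ⟨S, hS, u, v, hfun⟩ := glue_surj hkn σ (by rw [← hpmk]; exact hlast)
      have hperm : gluePerm S hS u v = σ := Equiv.ext fun i => hfun i
      have hudg : IsUpDown (gluePerm S hS u v) := by rw [hperm]; exact hud
      obtain ⟨hu, hv⟩ := (isUpDown_gluePerm_iff hp hkn S hS u v).mp hudg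
      exact ⟨⟨⟨S,hS⟩,⟨u,hu⟩,⟨v,hv⟩⟩, Subtype.ext hperm⟩
  rw [← Nat.card_eq_of_bijective Φ hΦbij]
  show Nat.card W = _
  rw [Nat.card_prod, Nat.card_prod]
  rw [Nat.card_eq_fintype_card, Fintype.card_finset_len, Fintype.card_fin]
  rw [show Nat.card {u : Equiv.Perm (Fin k) // IsUpDown u} = A k from rfl,
    show Nat.card {v : Equiv.Perm (Fin (n-k)) // IsUpDown v} = A (n-k) from rfl,
    mul_assoc]

lemma A_succ (n : ℕ) : A (n+1) = ∑ p : Fin (n+1),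
    Nat.card {σ : Equiv.Perm (Fin (n+1)) // IsUpDown σ ∧ σ p = Fin.last n} := by
  classical
  rw [A, Nat.card_congr (Equiv.sigmaFiberEquiv
    (fun σ : {σ : Equiv.Perm (Fin (n+1)) // IsUpDown σ} =>
      (σ : Equiv.Perm (Fin (n+1))).symm (Fin.last n))).symm]
  rw [Nat.card_eq_fintype_card, Fintype.card_sigma]
  refine Finset.sum_congr rfl fun p _ => ?_
  rw [← Nat.card_eq_fintype_card]
  refine Nat.card_congr ((Equiv.subtypeSubtypeEquivSubtypeInter
    (fun σ : Equiv.Perm (Fin (n+1)) => IsUpDown σ)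
    (fun σ : Equiv.Perm (Fin (n+1)) => σ.symm (Fin.last n) = p)).trans
    (Equiv.subtypeEquivRight fun σ => ?_))
  constructor
  · rintro ⟨h1, h2⟩
    exact ⟨h1, by rw [← h2, Equiv.apply_symm_apply]⟩
  · rintro ⟨h1, h2⟩
    exact ⟨h1, by rw [← h2, Equiv.symm_apply_apply]⟩

lemma A_rec (n : ℕ) : A (n+1) = (if n = 0 then 1 else 0)
    + ∑ k ∈ range (n+1), if Odd k then n.choose k * A k * A (n-k) else 0 := by
  rcases Nat.eq_zero_or_pos n with rfl | hn
  · rw [A_le_one 1 le_rfl]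
    simp [Nat.odd_iff]
  · rw [A_succ n, if_neg (by omega), zero_add]
    have h1 : ∀ p : Fin (n+1),
        Nat.card {σ : Equiv.Perm (Fin (n+1)) // IsUpDown σ ∧ σ p = Fin.last n}
        = (if Odd (p:ℕ) then n.choose (p:ℕ) * A (p:ℕ) * A (n-(p:ℕ)) else 0) := by
      intro p
      by_cases hp : Odd (p:ℕ)
      · rw [card_fiber_odd p hp, if_pos hp]
      · rw [card_fiber_even hn p hp, if_neg hp]
    rw [Finset.sum_congr rfl (fun p _ => h1 p)]
    have h2 := Fin.sum_univ_eq_sum_range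
      (fun k => if Odd k then n.choose k * A k * A (n-k) else 0) (n+1)
    simpa using h2

end Count

noncomputable def tt (n : ℕ) : ℝ := if Odd n then (A n : ℝ) / n.factorial else 0
noncomputable def cc (n : ℕ) : ℝ := if Even n then (-1)^(n/2) / n.factorial else 0
noncomputable def ssq (n : ℕ) : ℝ := if Odd n then (-1)^(n/2) / n.factorial else 0

noncomputable def T : ℝ⟦X⟧ := PowerSeries.mk tt
noncomputable def Tc : ℝ⟦X⟧ := PowerSeries.mk cc
noncomputable def Ts : ℝ⟦X⟧ := PowerSeries.mk ssq

lemma deriv_T : d⁄dX ℝ T = 1 + T * T := by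
  ext n
  rw [PowerSeries.coeff_derivative, map_add, PowerSeries.coeff_mul]
  simp only [T, PowerSeries.coeff_mk, Finset.Nat.sum_antidiagonal_eq_sum_range_succ_mk, tt]
  rcases Nat.even_or_odd n with he | ho
  · have hne : Odd (n+1) := he.add_one
    have h1 : ∀ k ∈ range (n+1), (if Odd k then (A k : ℝ) / k.factorial else 0) *
        (if Odd (n-k) then (A (n-k) : ℝ) / (n-k).factorial else 0)
        = (if Odd k then ((n.choose k : ℕ) * A k * A (n-k) : ℕ) else (0:ℕ)) / (n.factorial : ℝ) := by
      intro k hk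
      simp only [mem_range] at hk
      by_cases hko : Odd k
      · have hnk : Odd (n - k) := by
          rcases he with ⟨a, ha⟩; rcases hko with ⟨b, hb⟩; exact ⟨a - b - 1, by omega⟩
        rw [if_pos hko, if_pos hnk, if_pos hko]
        have hcf := Nat.choose_mul_factorial_mul_factorial (Nat.lt_succ_iff.mp hk)
        have h2 : (n.choose k : ℝ) * k.factorial * (n-k).factorial = n.factorial := by
          exact_mod_cast hcf
        have hk0 : (k.factorial : ℝ) ≠ 0 := by positivity
        have hnk0 : ((n-k).factorial : ℝ) ≠ 0 := by positivity
        have hn0 : (n.factorial : ℝ) ≠ 0 := by positivity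
        rw [div_mul_div_comm, div_eq_div_iff (by positivity) hn0]
        push_cast
        linear_combination (-((A k:ℝ)*(A (n-k)))) * h2
      · rw [if_neg hko, if_neg hko, Nat.cast_zero, zero_mul, zero_div]
    have e1 : (if Odd (n+1) then (A (n+1) : ℝ) / (n+1).factorial else 0) * ((n:ℝ)+1)
        = (A (n+1) : ℝ) / n.factorial := by
      rw [if_pos hne, Nat.factorial_succ]
      have : (n.factorial:ℝ) ≠ 0 := by positivity
      push_cast
      field_simp
    rw [e1, Finset.sum_congr rfl h1, ← Finset.sum_div, A_rec n, PowerSeries.coeff_one]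
    push_cast
    rw [add_div]
    by_cases h0 : n = 0
    · subst h0; norm_num
    · simp [h0]
  · have h1 : ∀ k ∈ range (n+1), (if Odd k then (A k : ℝ) / k.factorial else 0) *
        (if Odd (n-k) then (A (n-k) : ℝ) / (n-k).factorial else 0) = 0 := by
      intro k hk
      simp only [mem_range] at hk
      by_cases hko : Odd k
      · have : ¬ Odd (n - k) := by
          rcases ho with ⟨a, ha⟩; rcases hko with ⟨b, hb⟩
          rintro ⟨c, hc⟩; omega
        rw [if_neg this, mul_zero]
      · rw [if_neg hko, zero_mul]
    rw [Finset.sum_congr rfl h1, Finset.sum_const_zero]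
    rw [if_neg (by simpa using (ho.add_one)), PowerSeries.coeff_one,
      if_neg (by rintro rfl; exact (Nat.not_odd_zero) ho)]
    simp

lemma deriv_Tc : d⁄dX ℝ Tc = -Ts := by
  ext n
  rw [PowerSeries.coeff_derivative, map_neg]
  simp only [Tc, Ts, PowerSeries.coeff_mk, cc, ssq]
  rcases Nat.even_or_odd n with he | ho
  · rw [if_neg (Nat.not_even_iff_odd.mpr he.add_one), if_neg (Nat.not_odd_iff_even.mpr he),
      neg_zero, zero_mul]
  · rw [if_pos ho.add_one, if_pos ho]
    have hno := Nat.odd_iff.mp ho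
    have h2 : (n+1)/2 = n/2 + 1 := by omega
    rw [h2, pow_succ, Nat.factorial_succ]
    push_cast
    have : (n.factorial : ℝ) ≠ 0 := by positivity
    field_simp

lemma deriv_Ts : d⁄dX ℝ Ts = Tc := by
  ext n
  rw [PowerSeries.coeff_derivative]
  simp only [Tc, Ts, PowerSeries.coeff_mk, cc, ssq]
  rcases Nat.even_or_odd n with he | ho
  · rw [if_pos he.add_one, if_pos he]
    have hne := Nat.even_iff.mp he
    have h2 : (n+1)/2 = n/2 := by omega
    rw [h2, Nat.factorial_succ]
    push_cast
    have : (n.factorial : ℝ) ≠ 0 := by positivity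
    field_simp
  · rw [if_neg (Nat.not_odd_iff_even.mpr ho.add_one), if_neg (Nat.not_even_iff_odd.mpr ho),
      zero_mul]

lemma TTc_eq_Ts : T * Tc = Ts := by
  have hD : d⁄dX ℝ (T * Tc - Ts) = T * (T * Tc - Ts) := by
    rw [map_sub, Derivation.leibniz, deriv_T, deriv_Tc, deriv_Ts, smul_eq_mul, smul_eq_mul]
    ring
  have hzero : ∀ n, PowerSeries.coeff n (T * Tc - Ts) = 0 := by
    intro n
    induction n using Nat.strong_induction_on with
    | _ n ih =>
      match n with
      | 0 =>
        rw [map_sub, PowerSeries.coeff_mul]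
        simp [T, Tc, Ts, tt, ssq, Finset.Nat.antidiagonal_zero]
      | (m+1) =>
        have h1 : PowerSeries.coeff (m+1) (T * Tc - Ts) * ((m:ℝ)+1) = 0 := by
          have := congrArg (PowerSeries.coeff m) hD
          rw [PowerSeries.coeff_derivative, PowerSeries.coeff_mul] at this
          rw [show ((m:ℝ)+1) = ((m+1 : ℕ) : ℝ) by push_cast; ring] at this ⊢
          rw [this]
          apply Finset.sum_eq_zero
          intro p hp
          replace hp : p.1 + p.2 = m := Finset.HasAntidiagonal.mem_antidiagonal.mp hp
          rw [ih p.2 (by omega), mul_zero]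
        rcases mul_eq_zero.mp h1 with h | h
        · exact h
        · exact absurd h (by positivity)
  have h0 : T * Tc - Ts = 0 := PowerSeries.ext fun n => by rw [hzero n, map_zero]
  linear_combination h0

lemma key_conv (n : ℕ) : ∑ k ∈ range (n+1), tt k * cc (n-k) = ssq n := by
  have h := congrArg (PowerSeries.coeff n) TTc_eq_Ts
  rw [PowerSeries.coeff_mul, Finset.Nat.sum_antidiagonal_eq_sum_range_succ_mk] at h
  simpa [T, Tc, Ts] using h

lemma cos_ne_zero_of_norm_lt {z : ℂ} (hz : ‖z‖ < Real.pi/2) : Complex.cos z ≠ 0 := by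
  intro h0
  rw [Complex.cos_eq_zero_iff] at h0
  obtain ⟨k, rfl⟩ := h0
  have hπ := Real.pi_pos
  have h1 : (1:ℝ) ≤ |2*(k:ℝ)+1| := by
    have h : (2*k+1 : ℤ) ≠ 0 := by omega
    have h2 := Int.one_le_abs h
    have : ((2*k+1 : ℤ) : ℝ) = 2*(k:ℝ)+1 := by push_cast; ring
    rw [← this]
    exact_mod_cast h2
  have h2 : ‖(2 * (k:ℂ) + 1) * (Real.pi:ℂ) / 2‖ = |2*(k:ℝ)+1| * Real.pi / 2 := by
    rw [show (2 * (k:ℂ) + 1) * (Real.pi:ℂ) / 2 = (((2*(k:ℝ)+1) * Real.pi / 2 : ℝ) : ℂ) by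
      push_cast; ring]
    rw [Complex.norm_real, Real.norm_eq_abs, abs_div, abs_mul, abs_of_pos hπ]
    norm_num
  rw [h2] at hz
  nlinarith

lemma tan_ana : ∃ c : ℕ → ℂ, ∀ z : ℂ, ‖z‖ < Real.pi/2 →
    HasSum (fun n => c n * z ^ n) (Complex.tan z) ∧ Summable (fun n => ‖c n‖ * ‖z‖ ^ n) := by
  have hπ := Real.pi_gt_three
  have hdiff : ∀ (r : ℝ≥0), (r:ℝ) < Real.pi/2 →
      HasFPowerSeriesOnBall Complex.tan (cauchyPowerSeries Complex.tan 0 r) 0 r ∨ r = 0 := by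
    intro r hr
    rcases eq_or_lt_of_le (zero_le : (0:ℝ≥0) ≤ r) with h | h
    · right; exact h.symm
    · left
      refine DifferentiableOn.hasFPowerSeriesOnBall ?_ h
      intro z hz
      refine (Complex.differentiableAt_tan.mpr (cos_ne_zero_of_norm_lt ?_)).differentiableWithinAt
      simp only [Metric.mem_closedBall, dist_zero_right] at hz
      exact lt_of_le_of_lt hz hr
  have h1pos : (0:ℝ) < 1 := one_pos
  have h1lt : ((1:ℝ≥0):ℝ) < Real.pi/2 := by norm_num; linarith
  have hp1 := (hdiff 1 h1lt).resolve_right (by norm_num)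
  set p := cauchyPowerSeries Complex.tan 0 1 with hp
  refine ⟨p.coeff, fun z hz => ?_⟩
  set r : ℝ≥0 := ⟨(‖z‖ + Real.pi/2)/2, by positivity⟩ with hr
  have hcoe : (r:ℝ) = (‖z‖ + Real.pi/2)/2 := rfl
  have hzr : ‖z‖ < (r:ℝ) := by rw [hcoe]; linarith [Real.pi_gt_three]
  have hrπ : (r:ℝ) < Real.pi/2 := by rw [hcoe]; linarith [norm_nonneg z]
  have hpr := (hdiff r hrπ).resolve_right (by
    intro h; rw [h] at hcoe; simp at hcoe; nlinarith [norm_nonneg z, Real.pi_pos])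
  have heq : cauchyPowerSeries Complex.tan 0 r = p :=
    hpr.hasFPowerSeriesAt.eq_formalMultilinearSeries hp1.hasFPowerSeriesAt
  rw [heq] at hpr
  have hmem : z ∈ Metric.eball (0:ℂ) r := by
    rw [Metric.mem_eball, edist_zero_right]
    exact_mod_cast ENNReal.coe_lt_coe.mpr (show ‖z‖₊ < r from hzr)
  constructor
  · have := hpr.hasSum hmem
    simp only [zero_add] at this
    have e : (fun n => p.coeff n * z ^ n) = fun n => p n (fun _ => z) := by
      funext n
      rw [FormalMultilinearSeries.apply_eq_pow_smul_coeff, smul_eq_mul]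
      ring
    rw [e]; exact this
  · have hrad : (‖z‖₊ : ENNReal) < p.radius := by
      refine lt_of_lt_of_le ?_ hpr.r_le
      exact_mod_cast ENNReal.coe_lt_coe.mpr hzr
    have hs := p.summable_norm_mul_pow hrad
    refine Summable.of_nonneg_of_le (fun n => by positivity) (fun n => ?_) hs
    have hb : ‖p.coeff n‖ ≤ ‖p n‖ := by
      rw [FormalMultilinearSeries.coeff]
      calc ‖p n (fun _ => 1)‖ ≤ ‖p n‖ * ∏ _i : Fin n, ‖(1:ℂ)‖ := (p n).le_opNorm _
      _ = ‖p n‖ := by simp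
    have : (‖z‖₊ : ℝ) = ‖z‖ := rfl
    rw [this]
    exact mul_le_mul_of_nonneg_right hb (by positivity)

lemma coeff_unique {c d : ℕ → ℂ} {f : ℂ → ℂ} {r : ℝ} (hr : 0 < r)
    (hc : ∀ z : ℂ, ‖z‖ < r → HasSum (fun n => c n * z ^ n) (f z))
    (hd : ∀ z : ℂ, ‖z‖ < r → HasSum (fun n => d n * z ^ n) (f z)) : c = d := by
  have key : ∀ (e : ℕ → ℂ), (∀ z : ℂ, ‖z‖ < r → HasSum (fun n => e n * z ^ n) (f z)) →
      HasFPowerSeriesAt f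
        (fun n => ContinuousMultilinearMap.mkPiRing ℂ (Fin n) (e n) :
          FormalMultilinearSeries ℂ ℂ ℂ) 0 := by
    intro e he
    refine hasFPowerSeriesAt_iff.mpr ?_
    rw [Metric.eventually_nhds_iff]
    refine ⟨r, hr, fun {y} hy => ?_⟩
    rw [dist_zero_right] at hy
    have := he y hy
    simp only [zero_add]
    convert this using 2 with n
    case e'_3 => rfl
    change y ^ n * (ContinuousMultilinearMap.mkPiRing ℂ (Fin n) (e n)) 1 = e n * y ^ n
    simp [ContinuousMultilinearMap.mkPiRing_apply]
    ring
  have h := (key c hc).eq_formalMultilinearSeries (key d hd)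
  funext n
  have := congrFun h n
  simpa [ContinuousMultilinearMap.mkPiRing_eq_iff] using this

lemma hasSum_cc (z : ℂ) : HasSum (fun n => (cc n : ℂ) * z ^ n) (Complex.cos z) := by
  have h := Complex.hasSum_cos z
  have hinj : Function.Injective (fun n : ℕ => 2 * n) := fun a b hab => by dsimp only at hab; omega
  have hsupp : ∀ m ∉ Set.range (fun n : ℕ => 2 * n), (cc m : ℂ) * z ^ m = 0 := by
    intro m hm
    have : ¬ Even m := by rintro ⟨a, ha⟩; exact hm ⟨a, by dsimp only; omega⟩
    simp [cc, this]
  rw [← Function.Injective.hasSum_iff hinj hsupp]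
  convert h using 2 with n
  simp only [Function.comp]
  rw [cc, if_pos ⟨n, by omega⟩, show 2*n/2 = n by omega]
  push_cast
  ring

lemma hasSum_ssq (z : ℂ) : HasSum (fun n => (ssq n : ℂ) * z ^ n) (Complex.sin z) := by
  have h := Complex.hasSum_sin z
  have hinj : Function.Injective (fun n : ℕ => 2 * n + 1) := fun a b hab => by dsimp only at hab; omega
  have hsupp : ∀ m ∉ Set.range (fun n : ℕ => 2 * n + 1), (ssq m : ℂ) * z ^ m = 0 := by
    intro m hm
    have : ¬ Odd m := by rintro ⟨a, ha⟩; exact hm ⟨a, by dsimp only; omega⟩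
    simp [ssq, this]
  rw [← Function.Injective.hasSum_iff hinj hsupp]
  convert h using 2 with n
  simp only [Function.comp]
  rw [ssq, if_pos ⟨n, by omega⟩, show (2*n+1)/2 = n by omega]
  push_cast
  ring

lemma summable_cc_norm (z : ℂ) : Summable (fun n => ‖(cc n : ℂ) * z ^ n‖) := by
  refine Summable.of_nonneg_of_le (fun n => norm_nonneg _) (fun n => ?_)
    (Real.summable_pow_div_factorial ‖z‖)
  rw [norm_mul, norm_pow]
  have h1 : ‖((cc n : ℝ) : ℂ)‖ ≤ 1 / n.factorial := by
    rw [Complex.norm_real, Real.norm_eq_abs, cc]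
    by_cases h : Even n
    · rw [if_pos h, abs_div, abs_pow, abs_neg, abs_one, one_pow, Nat.abs_cast]
    · rw [if_neg h]
      simp only [abs_zero]
      positivity
  calc ‖((cc n : ℝ) : ℂ)‖ * ‖z‖^n ≤ (1/n.factorial) * ‖z‖^n := by
        exact mul_le_mul_of_nonneg_right h1 (by positivity)
    _ = ‖z‖^n / n.factorial := by ring

lemma conv_c : ∃ c : ℕ → ℂ, (∀ z : ℂ, ‖z‖ < Real.pi/2 → HasSum (fun n => c n * z^n) (Complex.tan z)) ∧
    ∀ n, ∑ k ∈ range (n+1), c k * (cc (n-k) : ℂ) = (ssq n : ℂ) := by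
  obtain ⟨c, hc⟩ := tan_ana
  refine ⟨c, fun z hz => (hc z hz).1, ?_⟩
  have key : ∀ z : ℂ, ‖z‖ < Real.pi/2 →
      HasSum (fun n => (∑ k ∈ range (n+1), c k * (cc (n-k):ℂ)) * z^n) (Complex.sin z) := by
    intro z hz
    obtain ⟨h1, h2⟩ := hc z hz
    have hccsum : Summable (fun n => ‖(cc n : ℂ) * z ^ n‖) := summable_cc_norm z
    have hcsum : Summable (fun n => ‖c n * z ^ n‖) := by
      convert h2 using 2 with n; rw [norm_mul, norm_pow]
    have hprod := tsum_mul_tsum_eq_tsum_sum_range_of_summable_norm hcsum hccsum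
    have hsummable := summable_norm_sum_mul_range_of_summable_norm hcsum hccsum
    have hS : Summable fun n => ∑ k ∈ range (n+1), (c k * z^k) * ((cc (n-k):ℂ) * z^(n-k)) :=
      Summable.of_norm hsummable
    have heq : (fun n => ∑ k ∈ range (n+1), (c k * z^k) * ((cc (n-k):ℂ) * z^(n-k)))
        = (fun n => (∑ k ∈ range (n+1), c k * (cc (n-k):ℂ)) * z^n) := by
      funext n
      rw [Finset.sum_mul]
      refine Finset.sum_congr rfl fun k hk => ?_
      rw [mem_range] at hk
      rw [mul_assoc, mul_comm (z^k), mul_assoc, ← pow_add, show n - k + k = n by omega]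
      ring
    have hsin : Complex.sin z = Complex.tan z * Complex.cos z := by
      rw [Complex.tan_eq_sin_div_cos, div_mul_cancel₀ _ (cos_ne_zero_of_norm_lt hz)]
    have hS' := hS.hasSum
    rw [heq] at hS'
    rw [← heq, ← hprod, h1.tsum_eq, (hasSum_cc z).tsum_eq, ← hsin] at hS'
    rwa [heq] at hS'
  have huniq := coeff_unique (f := Complex.sin) (r := Real.pi/2)
    (by positivity) key (fun z _ => hasSum_ssq z)
  intro n
  exact congrFun huniq n

lemma key_conv_complex (n : ℕ) :
    ∑ k ∈ range (n+1), (tt k : ℂ) * (cc (n-k) : ℂ) = (ssq n : ℂ) := by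
  exact_mod_cast key_conv n

lemma c_eq_tt (c : ℕ → ℂ)
    (hconv : ∀ n, ∑ k ∈ range (n+1), c k * (cc (n-k):ℂ) = (ssq n : ℂ)) :
    ∀ n, c n = (tt n : ℂ) := by
  intro n
  induction n using Nat.strong_induction_on with
  | _ n ih =>
    have h1 := hconv n
    have h2 := key_conv_complex n
    rw [Finset.sum_range_succ] at h1 h2
    have hsame : ∑ k ∈ range n, c k * (cc (n-k):ℂ) = ∑ k ∈ range n, (tt k:ℂ) * (cc (n-k):ℂ) :=
      Finset.sum_congr rfl fun k hk => by rw [ih k (mem_range.mp hk)]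
    rw [hsame] at h1
    have h3 := h1.trans h2.symm
    have hc0 : (cc (n-n) : ℂ) ≠ 0 := by
      rw [Nat.sub_self]
      simp [cc]
    exact mul_right_cancel₀ hc0 (add_left_cancel h3)

/-- For `|x| < π/2`, `tan x = ∑_{n≥0} A_{2n+1} x^{2n+1} / (2n+1)!`. -/
theorem tan_eq_sum (x : ℝ) (hx : |x| < Real.pi / 2) :
    HasSum (fun n : ℕ => (A (2 * n + 1) : ℝ) * x ^ (2 * n + 1) / ((2 * n + 1).factorial : ℝ))
      (Real.tan x) := by
  obtain ⟨c, hsum, hconv⟩ := conv_c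
  have hce : ∀ n, c n = (tt n : ℂ) := c_eq_tt c hconv
  have hz : ‖(x:ℂ)‖ < Real.pi/2 := by
    rwa [Complex.norm_real, Real.norm_eq_abs]
  have h := hsum x hz
  rw [funext hce] at h
  have h2 : HasSum (fun n => tt n * x^n) (Real.tan x) := by
    rw [← Complex.hasSum_ofReal]
    convert h using 2 with n
    · push_cast; ring
    · exact Complex.ofReal_tan x
  have hinj : Function.Injective (fun n : ℕ => 2*n+1) := fun a b hab => by dsimp only at hab; omega
  have hsupp : ∀ m ∉ Set.range (fun n:ℕ => 2*n+1), tt m * x^m = 0 := by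
    intro m hm
    have : ¬ Odd m := by rintro ⟨a,ha⟩; exact hm ⟨a, by dsimp only; omega⟩
    simp [tt, this]
  have h3 := (Function.Injective.hasSum_iff hinj hsupp).mpr h2
  convert h3 using 2 with n
  simp only [Function.comp, tt]
  rw [if_pos (odd_two_mul_add_one n)]
  ring
end

section
/- Fix n ≥ 1. For an up-down alternating permutation σ of {1,…,2n+1}, let 2j = σ⁻¹(2n+1) be the (necessarily even) position of the maximum, let V = {σ₁,…,σ_{2j−1}} ⊆ {1,…,2n}, let α be the standardization of the word σ₁σ₂⋯σ_{2j−1} (the unique permutation of {1,…,2j−1} order-isomorphic to it), and let β be the standardization of the word σ_{2j+1}⋯σ_{2n+1}. Then the map σ ↦ (j, V, α, β) is a bijection from the set of up-down alternating permutations of {1,…,2n+1} onto the set of quadruples (j, V, α, β) where 1 ≤ j ≤ n, V is a subset of {1,…,2n} of cardinality 2j−1, α is an up-down alternating permutation of {1,…,2j−1}, and β is an up-down alternating permutation of {1,…,2n+1−2j}. -/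
namespace AltDecomp

/-- standardization of an injective word -/
noncomputable def stdOf {m : ℕ} {γ : Type*} [LinearOrder γ] (f : Fin m → γ)
    (hf : Function.Injective f) : Equiv.Perm (Fin m) :=
  Equiv.ofBijective (fun s => ((Finset.univ.image f).orderIsoOfFin
      (by rw [Finset.card_image_of_injective _ hf]; simp)).symm
      ⟨f s, Finset.mem_image_of_mem f (Finset.mem_univ s)⟩)
    (Finite.injective_iff_bijective.mp (by
      intro a b hab
      have h2 := congrArg Subtype.val
        (((Finset.univ.image f).orderIsoOfFin _).symm.injective hab)
      exact hf h2))

lemma stdOf_lt_iff {m : ℕ} {γ : Type*} [LinearOrder γ] (f : Fin m → γ)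
    (hf : Function.Injective f) (s t : Fin m) :
    stdOf f hf s < stdOf f hf t ↔ f s < f t := by
  show ((Finset.univ.image f).orderIsoOfFin
        (by rw [Finset.card_image_of_injective _ hf]; simp)).symm _ <
      ((Finset.univ.image f).orderIsoOfFin
        (by rw [Finset.card_image_of_injective _ hf]; simp)).symm _ ↔ _
  rw [OrderIso.lt_iff_lt]
  exact Subtype.mk_lt_mk

lemma perm_eq_of_lt_iff {m : ℕ} {π π' : Equiv.Perm (Fin m)}
    (h : ∀ s t, π s < π t ↔ π' s < π' t) : π = π' := by
  have hmono : StrictMono fun k => π' (π.symm k) := by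
    intro a b hab
    rw [← h]
    simpa using hab
  have hsurj : Function.Surjective fun k => π' (π.symm k) :=
    (π.symm.trans π').surjective
  have he := Subsingleton.elim (StrictMono.orderIsoOfSurjective _ hmono hsurj)
    (OrderIso.refl (Fin m))
  ext x
  have := congrArg (fun (e : Fin m ≃o Fin m) => e (π x)) he
  simp at this
  simp [this]

lemma isUpDown_of_window {M m c : ℕ} (hc : c % 2 = 0) (hcm : c + m ≤ M)
    (σ : Equiv.Perm (Fin M)) (hσ : IsUpDown σ) (π : Equiv.Perm (Fin m))
    (h : ∀ s t : Fin m, π s < π t ↔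
      σ ⟨c + (s : ℕ), by omega⟩ < σ ⟨c + (t : ℕ), by omega⟩) : IsUpDown π := by
  intro i hi
  have h2 : c + i + 1 < M := by omega
  have hσ' := hσ (c + i) h2
  by_cases hp : i % 2 = 0
  · rw [if_pos hp]
    rw [if_pos (by omega)] at hσ'
    rw [h ⟨i, Nat.lt_of_succ_lt hi⟩ ⟨i + 1, hi⟩]
    exact hσ'
  · rw [if_neg hp]
    rw [if_neg (by omega)] at hσ'
    rw [h ⟨i + 1, hi⟩ ⟨i, Nat.lt_of_succ_lt hi⟩]
    exact hσ'

variable {n : ℕ}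

abbrev Quad (n : ℕ) := (j : Fin n) ×
          ({V : Finset (Fin (2 * n)) // V.card = 2 * (j : ℕ) + 1} ×
           {α : Equiv.Perm (Fin (2 * (j : ℕ) + 1)) // IsUpDown α} ×
           {β : Equiv.Perm (Fin (2 * (n - 1 - (j : ℕ)) + 1)) // IsUpDown β})

def Q (σ : Equiv.Perm (Fin (2 * n + 1))) (q : Quad n) : Prop :=
  σ ⟨2 * (q.1 : ℕ) + 1, by have := q.1.isLt; omega⟩ = Fin.last (2 * n) ∧
  (∀ v : Fin (2 * n), v ∈ q.2.1.val ↔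
    ∃ i : Fin (2 * n + 1), (i : ℕ) ≤ 2 * (q.1 : ℕ) ∧ σ i = Fin.castSucc v) ∧
  (∀ s t : Fin (2 * (q.1 : ℕ) + 1),
    q.2.2.1.val s < q.2.2.1.val t ↔
      σ ⟨(s : ℕ), by have := q.1.isLt; have := s.isLt; omega⟩ <
        σ ⟨(t : ℕ), by have := q.1.isLt; have := t.isLt; omega⟩) ∧
  (∀ s t : Fin (2 * (n - 1 - (q.1 : ℕ)) + 1),
    q.2.2.2.val s < q.2.2.2.val t ↔
      σ ⟨2 * (q.1 : ℕ) + 2 + (s : ℕ), by have := q.1.isLt; have := s.isLt; omega⟩ <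
        σ ⟨2 * (q.1 : ℕ) + 2 + (t : ℕ), by have := q.1.isLt; have := t.isLt; omega⟩)

lemma maxpos_odd (hn : 1 ≤ n) (σ : Equiv.Perm (Fin (2 * n + 1))) (hσ : IsUpDown σ) :
    ((σ.symm (Fin.last (2 * n))) : ℕ) % 2 = 1 := by
  set p := σ.symm (Fin.last (2 * n)) with hpdef
  have hσp : σ p = Fin.last _ := σ.apply_symm_apply _
  by_contra hodd
  have hpe : (p : ℕ) % 2 = 0 := by omega
  by_cases hlt : (p : ℕ) + 1 < 2 * n + 1
  · have h1 := hσ (p : ℕ) hlt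
    rw [if_pos hpe] at h1
    rw [show (⟨(p : ℕ), Nat.lt_of_succ_lt hlt⟩ : Fin (2 * n + 1)) = p from Fin.ext rfl,
      hσp] at h1
    exact absurd h1 (Fin.le_last _ : _ ≤ Fin.last (2 * n)).not_gt
  · have hp2n : (p : ℕ) = 2 * n := by have := p.isLt; omega
    have h2 : (2 * n - 1) + 1 < 2 * n + 1 := by omega
    have h1 := hσ (2 * n - 1) h2
    rw [if_neg (by omega)] at h1
    rw [show (⟨2 * n - 1 + 1, h2⟩ : Fin (2 * n + 1)) = p from Fin.ext (show 2 * n - 1 + 1 = (p : ℕ) by omega), hσp] at h1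
    exact absurd h1 (Fin.le_last _ : _ ≤ Fin.last (2 * n)).not_gt

lemma exists_Q (hn : 1 ≤ n) (σ : Equiv.Perm (Fin (2 * n + 1))) (hσ : IsUpDown σ) :
    ∃ q : Quad n, Q σ q := by
  have hodd := maxpos_odd hn σ hσ
  set p := σ.symm (Fin.last (2 * n)) with hpdef
  set jn : ℕ := ((p : ℕ) - 1) / 2 with hjdef
  have hplt := p.isLt
  have hp : 2 * jn + 1 = (p : ℕ) := by omega
  have hjn : 2 * jn + 1 < 2 * n + 1 := by omega
  have hjnn : jn < n := by omega
  have hmax : σ ⟨2 * jn + 1, hjn⟩ = Fin.last (2 * n) := by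
    rw [show (⟨2 * jn + 1, hjn⟩ : Fin (2 * n + 1)) = p from Fin.ext hp, hpdef,
      Equiv.apply_symm_apply]
  set fL : Fin (2 * jn + 1) → Fin (2 * n + 1) :=
    fun s => σ ⟨(s : ℕ), by have := s.isLt; omega⟩ with hfL
  have hfLinj : Function.Injective fL := by
    intro a b hab
    have h1 := σ.injective hab
    rw [Fin.mk.injEq] at h1
    exact Fin.ext h1
  have hfLne : ∀ s, fL s ≠ Fin.last (2 * n) := by
    intro s hlast
    have h1 := congrArg Fin.val (σ.injective (hlast.trans hmax.symm))
    simp only at h1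
    have := s.isLt; omega
  set VF : Finset (Fin (2 * n)) :=
    Finset.univ.image (fun s => (fL s).castPred (hfLne s)) with hVFdef
  have hVcard : VF.card = 2 * jn + 1 := by
    rw [hVFdef, Finset.card_image_of_injective, Finset.card_univ, Fintype.card_fin]
    intro a b hab
    apply hfLinj
    have := congrArg Fin.castSucc hab
    simpa [Fin.castSucc_castPred] using this
  set fR : Fin (2 * (n - 1 - jn) + 1) → Fin (2 * n + 1) :=
    fun s => σ ⟨2 * jn + 2 + (s : ℕ), by have := s.isLt; omega⟩ with hfR
  have hfRinj : Function.Injective fR := by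
    intro a b hab
    have h1 := σ.injective hab
    rw [Fin.mk.injEq] at h1
    exact Fin.ext (by omega)
  refine ⟨⟨⟨jn, hjnn⟩, ⟨VF, hVcard⟩, ⟨stdOf fL hfLinj, ?_⟩, ⟨stdOf fR hfRinj, ?_⟩⟩,
    hmax, ?_, fun s t => stdOf_lt_iff fL hfLinj s t, fun s t => stdOf_lt_iff fR hfRinj s t⟩
  · apply isUpDown_of_window (c := 0) (by norm_num)
      (show 0 + (2 * jn + 1) ≤ 2 * n + 1 by omega) σ hσ
    intro s t
    simp only [Nat.zero_add]
    exact stdOf_lt_iff fL hfLinj s t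
  · apply isUpDown_of_window (c := 2 * jn + 2) (by omega)
      (show 2 * jn + 2 + (2 * (n - 1 - jn) + 1) ≤ 2 * n + 1 by omega) σ hσ
    intro s t
    exact stdOf_lt_iff fR hfRinj s t
  · intro v
    show v ∈ VF ↔ ∃ i : Fin (2 * n + 1), (i : ℕ) ≤ 2 * jn ∧ σ i = Fin.castSucc v
    rw [hVFdef]
    simp only [Finset.mem_image, Finset.mem_univ, true_and]
    constructor
    · rintro ⟨s, rfl⟩
      exact ⟨⟨(s : ℕ), by have := s.isLt; omega⟩, Nat.lt_succ_iff.mp s.isLt,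
        (Fin.castSucc_castPred _ _).symm⟩
    · rintro ⟨i, hi, hv⟩
      refine ⟨⟨(i : ℕ), by omega⟩, ?_⟩
      have h2 : fL ⟨(i : ℕ), by omega⟩ = Fin.castSucc v := by
        rw [hfL]
        simpa using hv
      simp [h2]

lemma Q_unique_quad (σ : Equiv.Perm (Fin (2 * n + 1))) {q q' : Quad n}
    (h : Q σ q) (h' : Q σ q') : q = q' := by
  obtain ⟨j, V, α, β⟩ := q
  obtain ⟨j', V', α', β'⟩ := q'
  obtain ⟨h1, h2, h3, h4⟩ := h
  obtain ⟨h1', h2', h3', h4'⟩ := h'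
  have hj : j = j' := by
    have hh := σ.injective (h1.trans h1'.symm)
    rw [Fin.mk.injEq] at hh
    have hh' : 2 * (j : ℕ) + 1 = 2 * (j' : ℕ) + 1 := hh
    exact Fin.ext (by omega)
  subst hj
  have hV : V = V' := Subtype.ext (Finset.ext fun v => (h2 v).trans (h2' v).symm)
  have hα : α = α' := Subtype.ext (perm_eq_of_lt_iff fun s t => (h3 s t).trans (h3' s t).symm)
  have hβ : β = β' := Subtype.ext (perm_eq_of_lt_iff fun s t => (h4 s t).trans (h4' s t).symm)
  rw [hV, hα, hβ]

lemma compl_card (q : Quad n) : (q.2.1.val)ᶜ.card = 2 * (n - 1 - (q.1 : ℕ)) + 1 := by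
  rw [Finset.card_compl, q.2.1.prop, Fintype.card_fin]
  have := q.1.isLt
  omega

/-- the canonical permutation associated to a quadruple -/
noncomputable def gfun (q : Quad n) : Fin (2 * n + 1) → Fin (2 * n + 1) := fun i =>
  if hlt : (i : ℕ) < 2 * (q.1 : ℕ) + 1 then
    Fin.castSucc (q.2.1.val.orderEmbOfFin q.2.1.prop (q.2.2.1.val ⟨(i : ℕ), hlt⟩))
  else if (i : ℕ) = 2 * (q.1 : ℕ) + 1 then Fin.last (2 * n)
  else Fin.castSucc ((q.2.1.val)ᶜ.orderEmbOfFin (compl_card q)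
    (q.2.2.2.val ⟨(i : ℕ) - (2 * (q.1 : ℕ) + 2), by
      have := i.isLt; have := q.1.isLt; omega⟩))

lemma gfun_left (q : Quad n) (k : ℕ) (hk : k < 2 * (q.1 : ℕ) + 1) (hk2 : k < 2 * n + 1) :
    gfun q ⟨k, hk2⟩ = Fin.castSucc
      (q.2.1.val.orderEmbOfFin q.2.1.prop (q.2.2.1.val ⟨k, hk⟩)) := dif_pos hk

lemma gfun_mid (q : Quad n) (hk2 : 2 * (q.1 : ℕ) + 1 < 2 * n + 1) :
    gfun q ⟨2 * (q.1 : ℕ) + 1, hk2⟩ = Fin.last (2 * n) := by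
  rw [gfun, dif_neg (lt_irrefl _), if_pos rfl]

lemma gfun_right (q : Quad n) (s : ℕ) (hs : s < 2 * (n - 1 - (q.1 : ℕ)) + 1)
    (hk2 : 2 * (q.1 : ℕ) + 2 + s < 2 * n + 1) :
    gfun q ⟨2 * (q.1 : ℕ) + 2 + s, hk2⟩ = Fin.castSucc
      ((q.2.1.val)ᶜ.orderEmbOfFin (compl_card q) (q.2.2.2.val ⟨s, hs⟩)) := by
  rw [gfun, dif_neg (show ¬(2 * (q.1 : ℕ) + 2 + s < 2 * (q.1 : ℕ) + 1) by omega),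
    if_neg (show ¬(2 * (q.1 : ℕ) + 2 + s = 2 * (q.1 : ℕ) + 1) by omega)]
  exact congrArg
    (fun z : Fin (2 * (n - 1 - (q.1 : ℕ)) + 1) =>
      Fin.castSucc ((q.2.1.val)ᶜ.orderEmbOfFin (compl_card q) (q.2.2.2.val z)))
    (Fin.ext (show 2 * (q.1 : ℕ) + 2 + s - (2 * (q.1 : ℕ) + 2) = s by omega))

lemma Q_eq (σ : Equiv.Perm (Fin (2 * n + 1))) {q : Quad n} (h : Q σ q) :
    ∀ i, σ i = gfun q i := by
  obtain ⟨h1, h2, h3, h4⟩ := h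
  set jn := (q.1 : ℕ) with hjn
  have hjnn : jn < n := q.1.isLt
  set V := q.2.1.val with hVdef
  set α := q.2.2.1.val with hαdef
  set β := q.2.2.2.val with hβdef
  have hne : ∀ (i : Fin (2 * n + 1)), (i : ℕ) ≠ 2 * jn + 1 → σ i ≠ Fin.last (2 * n) := by
    intro i hi hlast
    have h5 := σ.injective (hlast.trans h1.symm)
    apply hi
    rw [h5]
  -- left word
  set fl : Fin (2 * jn + 1) → Fin (2 * n) := fun k =>
    (σ ⟨(α.symm k : ℕ), by have := (α.symm k).isLt; omega⟩).castPred
      (hne _ (show (α.symm k : ℕ) ≠ 2 * jn + 1 by have := (α.symm k).isLt; omega)) with hfl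
  have hmemL : ∀ k, fl k ∈ V := by
    intro k
    apply (h2 _).mpr
    exact ⟨⟨(α.symm k : ℕ), by have := (α.symm k).isLt; omega⟩,
      (show (α.symm k : ℕ) ≤ 2 * jn by have := (α.symm k).isLt; omega),
      (Fin.castSucc_castPred _ _).symm⟩
  have hmonoL : StrictMono fl := by
    intro a b hab
    have h5 := (h3 (α.symm a) (α.symm b)).mp (by simpa using hab)
    rw [Fin.lt_def] at h5
    simp only [hfl, Fin.lt_def, Fin.coe_castPred]
    exact h5
  have hflemb : fl = ⇑(V.orderEmbOfFin q.2.1.prop) :=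
    Finset.orderEmbOfFin_unique _ hmemL hmonoL
  -- right word
  set fr : Fin (2 * (n - 1 - jn) + 1) → Fin (2 * n) := fun k =>
    (σ ⟨2 * jn + 2 + (β.symm k : ℕ), by have := (β.symm k).isLt; omega⟩).castPred
      (hne _ (show 2 * jn + 2 + (β.symm k : ℕ) ≠ 2 * jn + 1 by omega)) with hfr
  have hmemR : ∀ k, fr k ∈ Vᶜ := by
    intro k
    rw [Finset.mem_compl]
    intro hmem
    obtain ⟨i, hi, hvi⟩ := (h2 _).mp hmem
    have h5 : i = ⟨2 * jn + 2 + (β.symm k : ℕ), by have := (β.symm k).isLt; omega⟩ :=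
      σ.injective (hvi.trans (Fin.castSucc_castPred _ _))
    have h6 : (i : ℕ) = 2 * jn + 2 + (β.symm k : ℕ) := by rw [h5]
    omega
  have hmonoR : StrictMono fr := by
    intro a b hab
    have h5 := (h4 (β.symm a) (β.symm b)).mp (by simpa using hab)
    rw [Fin.lt_def] at h5
    simp only [hfr, Fin.lt_def, Fin.coe_castPred]
    exact h5
  have hfremb : fr = ⇑((Vᶜ).orderEmbOfFin (compl_card q)) :=
    Finset.orderEmbOfFin_unique _ hmemR hmonoR
  -- pointwise
  intro i
  by_cases hlt : (i : ℕ) < 2 * jn + 1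
  · rw [show i = ⟨(i : ℕ), i.isLt⟩ from Fin.ext rfl, gfun_left q _ hlt]
    rw [← congrFun hflemb (α ⟨(i : ℕ), hlt⟩), hfl, Fin.castSucc_castPred]
    exact congrArg σ (Fin.ext (by simp))
  · by_cases heq : (i : ℕ) = 2 * jn + 1
    · rw [show i = ⟨2 * jn + 1, by omega⟩ from Fin.ext heq, gfun_mid q (by omega)]
      exact h1
    · rw [show i = ⟨2 * jn + 2 + ((i : ℕ) - (2 * jn + 2)), by have := i.isLt; omega⟩ from
        Fin.ext (show (i : ℕ) = 2 * jn + 2 + ((i : ℕ) - (2 * jn + 2)) by omega),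
        gfun_right q _ (by have := i.isLt; omega) (by have := i.isLt; omega)]
      rw [← congrFun hfremb (β ⟨(i : ℕ) - (2 * jn + 2), by have := i.isLt; omega⟩), hfr,
        Fin.castSucc_castPred]
      exact congrArg σ (Fin.ext (by simp))

lemma Q_unique_perm {σ σ' : Equiv.Perm (Fin (2 * n + 1))} {q : Quad n}
    (h : Q σ q) (h' : Q σ' q) : σ = σ' :=
  Equiv.ext fun i => (Q_eq σ h i).trans (Q_eq σ' h' i).symm

lemma upDown_of_Q {n : ℕ} (hn : 1 ≤ n) {σ : Equiv.Perm (Fin (2 * n + 1))} {q : Quad n}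
    (h : Q σ q) : IsUpDown σ := by
  obtain ⟨h1, h2, h3, h4⟩ := h
  set jn := (q.1 : ℕ) with hjn
  have hjnn : jn < n := q.1.isLt
  have hα : IsUpDown q.2.2.1.val := q.2.2.1.prop
  have hβ : IsUpDown q.2.2.2.val := q.2.2.2.prop
  have hne : ∀ (i : Fin (2 * n + 1)), (i : ℕ) ≠ 2 * jn + 1 → σ i < Fin.last (2 * n) := by
    intro i hi
    refine lt_of_le_of_ne (Fin.le_last _) (fun hlast => hi ?_)
    have h5 := σ.injective (hlast.trans h1.symm)
    rw [h5]
  intro i hi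
  by_cases c1 : i + 1 < 2 * jn + 1
  · have hα' := hα i c1
    by_cases hp : i % 2 = 0
    · rw [if_pos hp]
      rw [if_pos hp] at hα'
      exact (h3 ⟨i, by omega⟩ ⟨i + 1, c1⟩).mp hα'
    · rw [if_neg hp]
      rw [if_neg hp] at hα'
      exact (h3 ⟨i + 1, c1⟩ ⟨i, by omega⟩).mp hα'
  · by_cases c2 : i + 1 = 2 * jn + 1
    · rw [if_pos (by omega)]
      have he : (⟨i + 1, hi⟩ : Fin (2 * n + 1)) = ⟨2 * jn + 1, by omega⟩ := Fin.ext c2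
      rw [he, h1]
      exact hne _ (show i ≠ 2 * jn + 1 by omega)
    · by_cases c3 : i = 2 * jn + 1
      · rw [if_neg (by omega)]
        have he : (⟨i, Nat.lt_of_succ_lt hi⟩ : Fin (2 * n + 1)) = ⟨2 * jn + 1, by omega⟩ :=
          Fin.ext c3
        rw [he, h1]
        exact hne _ (show i + 1 ≠ 2 * jn + 1 by omega)
      · have hge : 2 * jn + 2 ≤ i := by omega
        obtain ⟨s, rfl⟩ : ∃ s, i = 2 * jn + 2 + s := ⟨i - (2 * jn + 2), by omega⟩
        have hs1 : s + 1 < 2 * (n - 1 - jn) + 1 := by omega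
        have hβ' := hβ s hs1
        have e2 : (⟨2 * jn + 2 + s + 1, hi⟩ : Fin (2 * n + 1)) =
            ⟨2 * jn + 2 + (s + 1), by omega⟩ := Fin.ext (show 2 * jn + 2 + s + 1 = 2 * jn + 2 + (s + 1) by omega)
        by_cases hp : s % 2 = 0
        · rw [if_pos (show (2 * jn + 2 + s) % 2 = 0 by omega), e2]
          rw [if_pos hp] at hβ'
          exact (h4 ⟨s, by omega⟩ ⟨s + 1, hs1⟩).mp hβ'
        · rw [if_neg (show ¬(2 * jn + 2 + s) % 2 = 0 by omega), e2]
          rw [if_neg hp] at hβ'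
          exact (h4 ⟨s + 1, hs1⟩ ⟨s, by omega⟩).mp hβ'


set_option maxHeartbeats 1000000 in
lemma gfun_surj (q : Quad n) : Function.Surjective (gfun q) := by
  set jn := (q.1 : ℕ) with hjn
  have hjnn : jn < n := q.1.isLt
  set V := q.2.1.val with hVdef
  set α := q.2.2.1.val with hαdef
  set β := q.2.2.2.val with hβdef
  intro y
  by_cases hy : y = Fin.last (2 * n)
  · exact ⟨⟨2 * jn + 1, by omega⟩, by rw [gfun_mid q (by omega), hy]⟩
  · set v := y.castPred hy with hv
    have hyv : Fin.castSucc v = y := Fin.castSucc_castPred _ _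
    by_cases hmem : v ∈ V
    · have hrange : v ∈ Set.range ⇑(V.orderEmbOfFin q.2.1.prop) := by
        rw [Finset.range_orderEmbOfFin]
        exact Finset.mem_coe.mpr hmem
      obtain ⟨k, hk⟩ := hrange
      refine ⟨⟨(α.symm k : ℕ), by have := (α.symm k).isLt; omega⟩, ?_⟩
      rw [gfun_left q _ (show (α.symm k : ℕ) < 2 * jn + 1 from (α.symm k).isLt) _]
      simp only [Fin.eta]
      rw [Equiv.apply_symm_apply, hk, hyv]
    · have hrange : v ∈ Set.range ⇑((Vᶜ).orderEmbOfFin (compl_card q)) := by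
        rw [Finset.range_orderEmbOfFin]
        exact Finset.mem_coe.mpr (Finset.mem_compl.mpr hmem)
      obtain ⟨k, hk⟩ := hrange
      refine ⟨⟨2 * jn + 2 + (β.symm k : ℕ), by have := (β.symm k).isLt; omega⟩, ?_⟩
      rw [gfun_right q _ (β.symm k).isLt _]
      simp only [Fin.eta]
      rw [Equiv.apply_symm_apply, hk, hyv]

noncomputable def gperm (q : Quad n) : Equiv.Perm (Fin (2 * n + 1)) :=
  Equiv.ofBijective _ (Finite.surjective_iff_bijective.mp (gfun_surj q))

lemma gperm_app (q : Quad n) : ∀ x, gperm q x = gfun q x := fun _ => rfl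

set_option maxHeartbeats 1000000 in
lemma gperm_Q (hn : 1 ≤ n) (q : Quad n) : Q (gperm q) q := by
  set jn := (q.1 : ℕ) with hjn
  have hjnn : jn < n := q.1.isLt
  set V := q.2.1.val with hVdef
  set α := q.2.2.1.val with hαdef
  set β := q.2.2.2.val with hβdef
  have hgapp := gperm_app q
  set g := gperm q with hg
  refine ⟨?_, ?_, ?_, ?_⟩
  · -- (1)
    exact gfun_mid q (by omega)
  · -- (2)
    intro v
    constructor
    · intro hmem
      have hrange : v ∈ Set.range ⇑(V.orderEmbOfFin q.2.1.prop) := by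
        rw [Finset.range_orderEmbOfFin]
        exact Finset.mem_coe.mpr hmem
      obtain ⟨k, hk⟩ := hrange
      refine ⟨⟨(α.symm k : ℕ), by have := (α.symm k).isLt; omega⟩,
        show (α.symm k : ℕ) ≤ 2 * jn by have := (α.symm k).isLt; omega, ?_⟩
      rw [hgapp, gfun_left q _ (show (α.symm k : ℕ) < 2 * jn + 1 from (α.symm k).isLt) _]
      simp only [Fin.eta]
      rw [Equiv.apply_symm_apply, hk]
    · rintro ⟨i, hi, hgi⟩
      rw [hgapp] at hgi
      rw [show i = ⟨(i : ℕ), i.isLt⟩ from Fin.ext rfl,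
        gfun_left q _ (show (i : ℕ) < 2 * jn + 1 by omega) _] at hgi
      have := Fin.castSucc_injective _ hgi
      rw [← this]
      exact Finset.orderEmbOfFin_mem _ _ _
  · -- (3)
    intro s t
    simp only [hgapp]
    rw [gfun_left q _ s.isLt _, gfun_left q _ t.isLt _,
      Fin.castSucc_lt_castSucc_iff, OrderEmbedding.lt_iff_lt]
  · -- (4)
    intro s t
    simp only [hgapp]
    rw [gfun_right q _ s.isLt _, gfun_right q _ t.isLt _,
      Fin.castSucc_lt_castSucc_iff, OrderEmbedding.lt_iff_lt]


lemma exists_perm (hn : 1 ≤ n) (q : Quad n) :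
    ∃ σ : Equiv.Perm (Fin (2 * n + 1)), IsUpDown σ ∧ Q σ q :=
  ⟨gperm q, upDown_of_Q hn (gperm_Q hn q), gperm_Q hn q⟩

end AltDecomp

/-- The canonical decomposition of up-down alternating permutations of `{1,…,2n+1}`.
Here `j : Fin n` encodes the integer `j+1 ∈ {1,…,n}` of the statement, so that the
(0-indexed) position of the maximum is `2j+1` (1-indexed position `2(j+1)`), the left
word has length `2j+1 = 2(j+1)−1` and the right word has length
`2(n−1−j)+1 = 2n+1−2(j+1)`.  The map `σ ↦ (j, V, α, β)` — where `V` is the set of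
values appearing left of the maximum and `α`, `β` are the standardizations of the
left and right words (the unique permutations order-isomorphic to them) — is a
bijection onto the set of quadruples described in the statement. -/
theorem alternating_decomposition_bijection (n : ℕ) (hn : 1 ≤ n) :
    ∃ F : {σ : Equiv.Perm (Fin (2 * n + 1)) // IsUpDown σ} →
        (j : Fin n) ×
          ({V : Finset (Fin (2 * n)) // V.card = 2 * (j : ℕ) + 1} ×
           {α : Equiv.Perm (Fin (2 * (j : ℕ) + 1)) // IsUpDown α} ×
           {β : Equiv.Perm (Fin (2 * (n - 1 - (j : ℕ)) + 1)) // IsUpDown β}),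
      Function.Bijective F ∧
      ∀ (σ : {σ : Equiv.Perm (Fin (2 * n + 1)) // IsUpDown σ})
        (j : Fin n)
        (V : {V : Finset (Fin (2 * n)) // V.card = 2 * (j : ℕ) + 1})
        (α : {α : Equiv.Perm (Fin (2 * (j : ℕ) + 1)) // IsUpDown α})
        (β : {β : Equiv.Perm (Fin (2 * (n - 1 - (j : ℕ)) + 1)) // IsUpDown β}),
        F σ = ⟨j, V, α, β⟩ →
          -- the maximum `2n+1` sits at 1-indexed position `2(j+1)`:
          σ.val ⟨2 * (j : ℕ) + 1, by have := j.isLt; omega⟩ = Fin.last (2 * n) ∧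
          -- `V` is the set of values (all `< 2n+1`) appearing strictly left of the maximum:
          (∀ v : Fin (2 * n), v ∈ V.val ↔
            ∃ i : Fin (2 * n + 1), (i : ℕ) ≤ 2 * (j : ℕ) ∧ σ.val i = Fin.castSucc v) ∧
          -- `α` is the standardization of the left word `σ₁ ⋯ σ_{2(j+1)−1}`:
          (∀ s t : Fin (2 * (j : ℕ) + 1),
            α.val s < α.val t ↔
              σ.val ⟨(s : ℕ), by have := j.isLt; have := s.isLt; omega⟩ <
                σ.val ⟨(t : ℕ), by have := j.isLt; have := t.isLt; omega⟩) ∧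
          -- `β` is the standardization of the right word `σ_{2(j+1)+1} ⋯ σ_{2n+1}`:
          (∀ s t : Fin (2 * (n - 1 - (j : ℕ)) + 1),
            β.val s < β.val t ↔
              σ.val ⟨2 * (j : ℕ) + 2 + (s : ℕ), by have := j.isLt; have := s.isLt; omega⟩ <
                σ.val ⟨2 * (j : ℕ) + 2 + (t : ℕ), by have := j.isLt; have := t.isLt; omega⟩) := by
  classical
  choose F hF using fun σ : {σ : Equiv.Perm (Fin (2 * n + 1)) // IsUpDown σ} =>
    AltDecomp.exists_Q hn σ.val σ.prop
  refine ⟨F, ⟨?_, ?_⟩, ?_⟩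
  · intro σ σ' h
    exact Subtype.ext (AltDecomp.Q_unique_perm (hF σ) (h ▸ hF σ'))
  · intro q
    obtain ⟨g, hg1, hg2⟩ := AltDecomp.exists_perm hn q
    exact ⟨⟨g, hg1⟩, AltDecomp.Q_unique_quad g (hF ⟨g, hg1⟩) hg2⟩
  · intro σ j V α β h
    have hq := hF σ
    rw [h] at hq
    obtain ⟨h1, h2, h3, h4⟩ := hq
    exact ⟨h1, h2, h3, h4⟩
end

section
/- Define the Entringer numbers E(n,k) for 0 ≤ k ≤ n by the recurrence E(0,0) = 1, E(n,0) = 0 for n ≥ 1, and E(n,k) = E(n,k−1) + E(n−1,n−k) for n ≥ 1 and 1 ≤ k ≤ n. Then for every n, the diagonal value E(n,n) equals A_n, the number of up-down alternating permutations of {1,…,n}. -/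
/-- down-up alternating: `σ₀ > σ₁ < σ₂ > ⋯` (0-indexed). -/
def IsDownUp {n : ℕ} (σ : Equiv.Perm (Fin n)) : Prop :=
  ∀ (i : ℕ) (h : i + 1 < n),
    if i % 2 = 0 then σ ⟨i + 1, h⟩ < σ ⟨i, Nat.lt_of_succ_lt h⟩
    else σ ⟨i, Nat.lt_of_succ_lt h⟩ < σ ⟨i + 1, h⟩

def dd {n : ℕ} (k : ℕ) (hk : k ≤ n + 1) (u : Fin (n + 2)) : Fin (n + 1) :=
  if h : (u : ℕ) < k then ⟨u, by omega⟩ else ⟨(u : ℕ) - 1, by have := u.isLt; omega⟩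

def ps {n : ℕ} (k : ℕ) (w : Fin (n + 1)) : Fin (n + 2) :=
  if h : (w : ℕ) < k then ⟨w, by have := w.isLt; omega⟩
  else ⟨(w : ℕ) + 1, by have := w.isLt; omega⟩

lemma dd_val {n k : ℕ} (hk : k ≤ n + 1) (u : Fin (n + 2)) :
    ((dd k hk u : Fin (n + 1)) : ℕ) = if (u : ℕ) < k then (u : ℕ) else (u : ℕ) - 1 := by
  unfold dd; split_ifs <;> rfl

lemma ps_val {n k : ℕ} (w : Fin (n + 1)) :
    ((ps k w : Fin (n + 2)) : ℕ) = if (w : ℕ) < k then (w : ℕ) else (w : ℕ) + 1 := by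
  unfold ps; split_ifs <;> rfl

lemma dd_ps {n k : ℕ} (hk : k ≤ n + 1) (w : Fin (n + 1)) : dd k hk (ps k w) = w := by
  have := w.isLt
  apply Fin.ext
  simp only [dd_val, ps_val]
  split_ifs <;> omega

lemma ps_dd {n k : ℕ} (hk : k ≤ n + 1) (u : Fin (n + 2)) (hu : (u : ℕ) ≠ k) :
    ps k (dd k hk u) = u := by
  have := u.isLt
  apply Fin.ext
  simp only [dd_val, ps_val]
  split_ifs <;> omega

lemma ps_ne {n k : ℕ} (w : Fin (n + 1)) : ((ps k w : Fin (n + 2)) : ℕ) ≠ k := by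
  have := w.isLt
  simp only [ps_val]
  split_ifs <;> omega

lemma dd_lt_dd {n k : ℕ} (hk : k ≤ n + 1) {u v : Fin (n + 2)}
    (hu : (u : ℕ) ≠ k) (hv : (v : ℕ) ≠ k) : dd k hk u < dd k hk v ↔ u < v := by
  have := u.isLt; have := v.isLt
  simp only [Fin.lt_def, dd_val]
  split_ifs <;> omega

lemma ps_lt_ps {n k : ℕ} {w w' : Fin (n + 1)} : ps k w < ps k w' ↔ w < w' := by
  have := w.isLt; have := w'.isLt
  simp only [Fin.lt_def, ps_val]
  split_ifs <;> omega

section master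
variable {n k : ℕ}

lemma ne_k_of_ne_zero {k : ℕ} {σ : Equiv.Perm (Fin (n + 2))} (hσ0 : (σ 0 : ℕ) = k)
    {j : Fin (n + 2)} (hj : j ≠ 0) : ((σ j : ℕ) ≠ k) := by
  intro hc
  exact hj (σ.injective (Fin.ext (hc.trans hσ0.symm)))

noncomputable def fwdPerm (hk2 : k ≤ n + 1) (σ : Equiv.Perm (Fin (n + 2))) (hσ0 : (σ 0 : ℕ) = k) :
    Equiv.Perm (Fin (n + 1)) :=
  Equiv.ofBijective (fun i : Fin (n + 1) => dd k hk2 (σ ⟨(i : ℕ) + 1, by have := i.isLt; omega⟩))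
    (Finite.injective_iff_bijective.mp (by
      intro i j hij
      have hi : ((σ ⟨(i : ℕ) + 1, by have := i.isLt; omega⟩ : Fin (n + 2)) : ℕ) ≠ k :=
        ne_k_of_ne_zero hσ0 (Fin.ne_of_val_ne (by rw [Fin.val_zero]; exact Nat.succ_ne_zero _))
      have hj : ((σ ⟨(j : ℕ) + 1, by have := j.isLt; omega⟩ : Fin (n + 2)) : ℕ) ≠ k :=
        ne_k_of_ne_zero hσ0 (Fin.ne_of_val_ne (by rw [Fin.val_zero]; exact Nat.succ_ne_zero _))
      have h2 := congrArg (ps (n := n) k) hij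
      rw [ps_dd _ _ hi, ps_dd _ _ hj] at h2
      have h3 := σ.injective h2
      have h4 : (i : ℕ) + 1 = (j : ℕ) + 1 := by
        have := Fin.ext_iff.mp h3; simpa using this
      exact Fin.ext (by omega)))

lemma fwdPerm_apply (hk2 : k ≤ n + 1) (σ : Equiv.Perm (Fin (n + 2))) (hσ0 : (σ 0 : ℕ) = k)
    (i : Fin (n + 1)) :
    fwdPerm hk2 σ hσ0 i = dd k hk2 (σ ⟨(i : ℕ) + 1, by have := i.isLt; omega⟩) := rfl

noncomputable def bwdPerm (hk2 : k ≤ n + 1) (τ : Equiv.Perm (Fin (n + 1))) :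
    Equiv.Perm (Fin (n + 2)) :=
  Equiv.ofBijective (fun j : Fin (n + 2) =>
      if h : (j : ℕ) = 0 then ⟨k, by omega⟩
      else ps k (τ ⟨(j : ℕ) - 1, by have := j.isLt; omega⟩))
    (Finite.injective_iff_bijective.mp (by
      intro i j hij
      simp only at hij
      split_ifs at hij with h1 h2 h2
      · exact Fin.ext (h1.trans h2.symm)
      · exact absurd (Fin.ext_iff.mp hij.symm) (ps_ne _)
      · exact absurd (Fin.ext_iff.mp hij) (ps_ne _)
      · have h3 := congrArg (dd (n := n) k hk2) hij
        rw [dd_ps, dd_ps] at h3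
        have h4 := Fin.ext_iff.mp (τ.injective h3)
        simp only at h4
        exact Fin.ext (by omega)))

lemma bwdPerm_apply (hk2 : k ≤ n + 1) (τ : Equiv.Perm (Fin (n + 1))) (j : Fin (n + 2)) :
    bwdPerm hk2 τ j = if h : (j : ℕ) = 0 then ⟨k, by omega⟩
      else ps k (τ ⟨(j : ℕ) - 1, by have := j.isLt; omega⟩) := rfl

lemma fwdPerm_isUpDown (hk2 : k ≤ n + 1) (σ : Equiv.Perm (Fin (n + 2)))
    (hσ0 : (σ 0 : ℕ) = k) (hσ : IsDownUp σ) : IsUpDown (fwdPerm hk2 σ hσ0) := by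
  intro i h
  have hd := hσ (i + 1) (by omega)
  have hne1 : ((σ ⟨i + 1, by omega⟩ : Fin (n + 2)) : ℕ) ≠ k :=
    ne_k_of_ne_zero hσ0 (by simp [Fin.ext_iff])
  have hne2 : ((σ ⟨i + 1 + 1, by omega⟩ : Fin (n + 2)) : ℕ) ≠ k :=
    ne_k_of_ne_zero hσ0 (by simp [Fin.ext_iff])
  by_cases hp : i % 2 = 0
  · rw [if_pos hp]
    rw [if_neg (by omega : ¬ (i + 1) % 2 = 0)] at hd
    exact (dd_lt_dd hk2 hne1 hne2).mpr hd
  · rw [if_neg hp]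
    rw [if_pos (by omega : (i + 1) % 2 = 0)] at hd
    exact (dd_lt_dd hk2 hne2 hne1).mpr hd

lemma fwdPerm_zero (hk2 : k ≤ n + 1) (σ : Equiv.Perm (Fin (n + 2))) (hσ0 : (σ 0 : ℕ) = k) :
    fwdPerm hk2 σ hσ0 0 = dd k hk2 (σ 1) := by
  rw [fwdPerm_apply]
  exact congrArg (dd k hk2) (congrArg σ (Fin.ext (by simp)))

lemma bwdPerm_zero (hk2 : k ≤ n + 1) (τ : Equiv.Perm (Fin (n + 1))) :
    bwdPerm hk2 τ 0 = ⟨k, by omega⟩ := by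
  rw [bwdPerm_apply, dif_pos (Fin.val_zero _)]

lemma bwdPerm_succ (hk2 : k ≤ n + 1) (τ : Equiv.Perm (Fin (n + 1))) (j : ℕ)
    (hj : j + 1 < n + 2) :
    bwdPerm hk2 τ ⟨j + 1, hj⟩ = ps k (τ ⟨j, by omega⟩) := by
  rw [bwdPerm_apply, dif_neg (by simp)]
  exact congrArg (ps k) (congrArg τ (Fin.ext (by simp)))

lemma bwdPerm_one (hk2 : k ≤ n + 1) (τ : Equiv.Perm (Fin (n + 1))) :
    bwdPerm hk2 τ 1 = ps k (τ 0) := by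
  have h1 : (1 : Fin (n + 2)) = ⟨0 + 1, by omega⟩ := by simp [Fin.ext_iff]
  rw [h1, bwdPerm_succ]
  exact congrArg (ps k) (congrArg τ (Fin.ext (by simp)))

lemma bwdPerm_isDownUp (hk1 : 1 ≤ k) (hk2 : k ≤ n + 1) (τ : Equiv.Perm (Fin (n + 1)))
    (hτ : IsUpDown τ) (hτ0 : (τ 0 : ℕ) < k) : IsDownUp (bwdPerm hk2 τ) := by
  intro i h
  cases i with
  | zero =>
    rw [if_pos rfl]
    have h1 : (⟨0 + 1, h⟩ : Fin (n + 2)) = ⟨0 + 1, by omega⟩ := rfl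
    rw [bwdPerm_succ hk2 τ 0 h]
    have h0 : (⟨0, Nat.lt_of_succ_lt h⟩ : Fin (n + 2)) = 0 := by simp [Fin.ext_iff]
    rw [h0, bwdPerm_zero]
    have h2 : (⟨0, by omega⟩ : Fin (n + 1)) = 0 := by simp [Fin.ext_iff]
    rw [h2, Fin.lt_def, ps_val, if_pos hτ0]
    exact hτ0
  | succ j =>
    have hd := hτ j (by omega)
    rw [bwdPerm_succ hk2 τ (j + 1) h, bwdPerm_succ hk2 τ j (Nat.lt_of_succ_lt h)]
    by_cases hp : j % 2 = 0
    · rw [if_neg (by omega : ¬ (j + 1) % 2 = 0)]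
      rw [if_pos hp] at hd
      exact ps_lt_ps.mpr hd
    · rw [if_pos (by omega : (j + 1) % 2 = 0)]
      rw [if_neg hp] at hd
      exact ps_lt_ps.mpr hd

noncomputable def masterEquiv (hk1 : 1 ≤ k) (hk2 : k ≤ n + 1)
    (P : Fin (n + 2) → Prop) (Q : Fin (n + 1) → Prop)
    (hPQ : ∀ u : Fin (n + 2), (u : ℕ) ≠ k → (P u ↔ Q (dd k hk2 u)))
    (hQ : ∀ w, Q w → (w : ℕ) < k) :
    {σ : Equiv.Perm (Fin (n + 2)) // (IsDownUp σ ∧ (σ 0 : ℕ) = k) ∧ P (σ 1)} ≃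
    {τ : Equiv.Perm (Fin (n + 1)) // IsUpDown τ ∧ Q (τ 0)} where
  toFun x := ⟨fwdPerm hk2 x.1 x.2.1.2, fwdPerm_isUpDown hk2 x.1 x.2.1.2 x.2.1.1, by
    rw [fwdPerm_zero]
    have h1 : ((x.1 1 : Fin (n + 2)) : ℕ) ≠ k :=
      ne_k_of_ne_zero x.2.1.2 (by simp [Fin.ext_iff])
    exact (hPQ _ h1).mp x.2.2⟩
  invFun y := ⟨bwdPerm hk2 y.1,
    ⟨⟨bwdPerm_isDownUp hk1 hk2 y.1 y.2.1 (hQ _ y.2.2), by rw [bwdPerm_zero]⟩, by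
      rw [bwdPerm_one]
      exact (hPQ _ (ps_ne _)).mpr (by rw [dd_ps]; exact y.2.2)⟩⟩
  left_inv x := by
    apply Subtype.ext
    apply Equiv.ext
    intro j
    obtain ⟨jv, hj⟩ := j
    cases jv with
    | zero =>
      rw [bwdPerm_apply, dif_pos rfl]
      have h0 : (⟨0, hj⟩ : Fin (n + 2)) = 0 := by simp [Fin.ext_iff]
      rw [h0]
      exact Fin.ext (x.2.1.2).symm
    | succ jv =>
      rw [bwdPerm_succ hk2 _ jv hj, fwdPerm_apply]
      have hne : ((x.1 ⟨(⟨jv, by omega⟩ : Fin (n + 1)).1 + 1, by omega⟩ : Fin (n + 2)) : ℕ) ≠ k :=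
        ne_k_of_ne_zero x.2.1.2 (by simp [Fin.ext_iff])
      rw [ps_dd _ _ hne]
  right_inv y := by
    apply Subtype.ext
    apply Equiv.ext
    intro i
    obtain ⟨iv, hi⟩ := i
    rw [fwdPerm_apply]
    have h1 : (⟨(⟨iv, hi⟩ : Fin (n + 1)).1 + 1, by omega⟩ : Fin (n + 2)) = ⟨iv + 1, by omega⟩ := rfl
    rw [h1, bwdPerm_succ hk2 _ iv (by omega), dd_ps]

end master

noncomputable def C (n k : ℕ) : ℕ :=
  Nat.card {σ : Equiv.Perm (Fin (n + 1)) // IsDownUp σ ∧ (σ 0 : ℕ) = k}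

lemma card_split {α : Type*} [Finite α] (P Q : α → Prop) :
    Nat.card {x // P x} = Nat.card {x // P x ∧ Q x} + Nat.card {x // P x ∧ ¬ Q x} := by
  classical
  rw [← Nat.card_sum]
  exact Nat.card_congr (Equiv.symm (((Equiv.subtypeSubtypeEquivSubtypeInter P Q).symm.sumCongr
    (Equiv.subtypeSubtypeEquivSubtypeInter P (fun x => ¬ Q x)).symm).trans
    (Equiv.sumCompl (fun y : {x // P x} => Q y.val))))

lemma first_desc {m : ℕ} {σ : Equiv.Perm (Fin (m + 2))} (hσ : IsDownUp σ) : σ 1 < σ 0 := by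
  have h := hσ 0 (by omega)
  simpa using h

lemma isDownUp_rev {n : ℕ} {σ : Equiv.Perm (Fin n)} (h : IsUpDown σ) :
    IsDownUp (Fin.revPerm * σ) := by
  intro i hi
  have hd := h i hi
  by_cases hp : i % 2 = 0 <;>
    simp_all [Equiv.Perm.mul_apply, Fin.rev_lt_rev]

lemma isUpDown_rev {n : ℕ} {σ : Equiv.Perm (Fin n)} (h : IsDownUp σ) :
    IsUpDown (Fin.revPerm * σ) := by
  intro i hi
  have hd := h i hi
  by_cases hp : i % 2 = 0 <;>
    simp_all [Equiv.Perm.mul_apply, Fin.rev_lt_rev]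

def revEquiv {n : ℕ} (c : ℕ) (hc : c ≤ n) :
    {τ : Equiv.Perm (Fin (n + 1)) // IsUpDown τ ∧ (τ 0 : ℕ) = c} ≃
    {ρ : Equiv.Perm (Fin (n + 1)) // IsDownUp ρ ∧ (ρ 0 : ℕ) = n - c} where
  toFun τ := ⟨Fin.revPerm * τ.1, isDownUp_rev τ.2.1, by
    have := τ.2.2
    simp [Equiv.Perm.mul_apply, Fin.val_rev]
    omega⟩
  invFun ρ := ⟨Fin.revPerm * ρ.1, isUpDown_rev ρ.2.1, by
    have := ρ.2.2
    have h2 := (ρ.1 0).isLt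
    simp [Equiv.Perm.mul_apply, Fin.val_rev]
    omega⟩
  left_inv τ := Subtype.ext (by ext x; simp [Equiv.Perm.mul_apply])
  right_inv ρ := Subtype.ext (by ext x; simp [Equiv.Perm.mul_apply])

lemma swap_lt {m : ℕ} {a b u v : Fin m} (hab : (b : ℕ) + 1 = a)
    (huv : u < v) (hne : ¬(u = b ∧ v = a)) :
    Equiv.swap a b u < Equiv.swap a b v := by
  have hne' : u ≠ b ∨ v ≠ a := by tauto
  simp only [Equiv.swap_apply_def]
  rcases hne' with h | h <;> split_ifs <;> fin_omega

lemma isDownUp_swap {m : ℕ} {σ : Equiv.Perm (Fin (m + 2))} {a b : Fin (m + 2)}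
    (hab : (b : ℕ) + 1 = a) (hσ : IsDownUp σ) (h0 : σ 0 = a ∨ σ 0 = b)
    (h1a : σ 1 ≠ a) (h1b : σ 1 ≠ b) :
    IsDownUp (Equiv.swap a b * σ) := by
  have e1 : ∀ (h : (1 : ℕ) < m + 2), (⟨1, h⟩ : Fin (m + 2)) = 1 := by
    intro h; simp [Fin.ext_iff]
  have hpair : ∀ (i : ℕ) (hi : i + 1 < m + 2),
      ¬(σ ⟨i + 1, hi⟩ = b ∧ σ ⟨i, Nat.lt_of_succ_lt hi⟩ = a) ∧
      ¬(σ ⟨i, Nat.lt_of_succ_lt hi⟩ = b ∧ σ ⟨i + 1, hi⟩ = a) := by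
    intro i hi
    cases i with
    | zero =>
      constructor <;> rintro ⟨hx, hy⟩
      · exact h1b (by rw [← e1 hi]; exact hx)
      · exact h1a (by rw [← e1 hi]; exact hy)
    | succ j =>
      have hz : (∀ (v : ℕ) (hv : v < m + 2), 1 ≤ v → σ ⟨v, hv⟩ ≠ a) ∨
          (∀ (v : ℕ) (hv : v < m + 2), 1 ≤ v → σ ⟨v, hv⟩ ≠ b) := by
        rcases h0 with h0 | h0
        · left; intro v hv h1v hc
          have := σ.injective (h0.trans hc.symm)
          simp [Fin.ext_iff] at this; omega
        · right; intro v hv h1v hc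
          have := σ.injective (h0.trans hc.symm)
          simp [Fin.ext_iff] at this; omega
      constructor <;> rintro ⟨hx, hy⟩ <;> rcases hz with h | h
      · exact h (j + 1) (Nat.lt_of_succ_lt hi) (by omega) hy
      · exact h (j + 2) hi (by omega) hx
      · exact h (j + 2) hi (by omega) hy
      · exact h (j + 1) (Nat.lt_of_succ_lt hi) (by omega) hx
  intro i hi
  have hd := hσ i hi
  have hp2 := hpair i hi
  by_cases hp : i % 2 = 0
  · rw [if_pos hp] at hd ⊢
    simp only [Equiv.Perm.mul_apply]
    exact swap_lt hab hd hp2.1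
  · rw [if_neg hp] at hd ⊢
    simp only [Equiv.Perm.mul_apply]
    exact swap_lt hab hd hp2.2

def swapEquiv {n k : ℕ} (hk1 : 1 ≤ k) (hk2 : k ≤ n + 1) :
    {σ : Equiv.Perm (Fin (n + 2)) // (IsDownUp σ ∧ (σ 0 : ℕ) = k) ∧ ¬((σ 1 : ℕ) = k - 1)} ≃
    {σ : Equiv.Perm (Fin (n + 2)) // IsDownUp σ ∧ (σ 0 : ℕ) = k - 1} := by
  set a : Fin (n + 2) := ⟨k, by omega⟩ with ha
  set b : Fin (n + 2) := ⟨k - 1, by omega⟩ with hb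
  have hab : (b : ℕ) + 1 = a := by simp [ha, hb]; omega
  have hba : b < a := by rw [Fin.lt_def]; omega
  exact {
    toFun := fun x => by
      have h0 : x.1 0 = a := Fin.ext (by rw [x.2.1.2])
      have h1b : x.1 1 ≠ b := fun hc => x.2.2 (by rw [hc])
      have h1a : x.1 1 ≠ a := ne_of_lt (h0 ▸ first_desc x.2.1.1)
      exact ⟨Equiv.swap a b * x.1,
        isDownUp_swap hab x.2.1.1 (Or.inl h0) h1a h1b,
        by simp [Equiv.Perm.mul_apply, h0, Equiv.swap_apply_left, hb]⟩
    invFun := fun y => by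
      have h0 : y.1 0 = b := Fin.ext (by rw [y.2.2])
      have hlt : y.1 1 < b := h0 ▸ first_desc y.2.1
      have h1b : y.1 1 ≠ b := ne_of_lt hlt
      have h1a : y.1 1 ≠ a := ne_of_lt (hlt.trans hba)
      refine ⟨Equiv.swap a b * y.1,
        ⟨⟨isDownUp_swap hab y.2.1 (Or.inr h0) h1a h1b,
          by simp [Equiv.Perm.mul_apply, h0, Equiv.swap_apply_right, ha]⟩, ?_⟩⟩
      have he : (Equiv.swap a b * y.1) 1 = y.1 1 := by
        simp only [Equiv.Perm.mul_apply]
        exact Equiv.swap_apply_of_ne_of_ne h1a h1b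
      rw [he]
      have := Fin.lt_def.mp hlt
      simp only [hb] at this
      omega
    left_inv := fun x => Subtype.ext (by
      show Equiv.swap a b * (Equiv.swap a b * x.1) = x.1
      rw [← mul_assoc, Equiv.swap_mul_self, one_mul])
    right_inv := fun y => Subtype.ext (by
      show Equiv.swap a b * (Equiv.swap a b * y.1) = y.1
      rw [← mul_assoc, Equiv.swap_mul_self, one_mul]) }

lemma C_zero_eq_one : C 0 0 = 1 := by
  have h1 : Nonempty {σ : Equiv.Perm (Fin 1) // IsDownUp σ ∧ ((σ 0 : Fin 1) : ℕ) = 0} :=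
    ⟨⟨1, fun i h => absurd h (by omega), by simp⟩⟩
  have h2 : Subsingleton {σ : Equiv.Perm (Fin 1) // IsDownUp σ ∧ ((σ 0 : Fin 1) : ℕ) = 0} :=
    ⟨fun x y => Subtype.ext (Equiv.ext fun a => Subsingleton.elim _ _)⟩
  exact Nat.card_unique

lemma A_zero : A 0 = 1 := by
  have h1 : Nonempty {σ : Equiv.Perm (Fin 0) // IsUpDown σ} :=
    ⟨⟨1, fun i h => absurd h (by omega)⟩⟩
  have h2 : Subsingleton {σ : Equiv.Perm (Fin 0) // IsUpDown σ} :=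
    ⟨fun x y => Subtype.ext (Equiv.ext fun a => a.elim0)⟩
  exact Nat.card_unique

lemma C_succ_zero (n : ℕ) : C (n + 1) 0 = 0 := by
  have : IsEmpty {σ : Equiv.Perm (Fin (n + 2)) // IsDownUp σ ∧ ((σ 0 : Fin (n + 2)) : ℕ) = 0} := by
    constructor
    rintro ⟨σ, hσ, h0⟩
    have := Fin.lt_def.mp (first_desc hσ)
    omega
  exact Nat.card_of_isEmpty

lemma C_A (n : ℕ) : C n n = A n := by
  cases n with
  | zero => rw [C_zero_eq_one, A_zero]
  | succ m =>
    have e1 : {σ : Equiv.Perm (Fin (m + 2)) // IsDownUp σ ∧ ((σ 0 : Fin (m + 2)) : ℕ) = m + 1} ≃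
        {σ : Equiv.Perm (Fin (m + 2)) //
          (IsDownUp σ ∧ ((σ 0 : Fin (m + 2)) : ℕ) = m + 1) ∧ (fun _ => True) (σ 1)} :=
      Equiv.subtypeEquivRight (fun σ => by tauto)
    have e2 := masterEquiv (n := m) (k := m + 1) (by omega) (by omega)
      (fun _ => True) (fun _ => True) (fun u _ => Iff.rfl) (fun w _ => w.isLt)
    have e3 : {τ : Equiv.Perm (Fin (m + 1)) // IsUpDown τ ∧ (fun _ => True) (τ 0)} ≃
        {τ : Equiv.Perm (Fin (m + 1)) // IsUpDown τ} :=
      Equiv.subtypeEquivRight (fun τ => by tauto)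
    exact Nat.card_congr ((e1.trans e2).trans e3)

lemma C_rec (n k : ℕ) (hk1 : 1 ≤ k) (hk2 : k ≤ n + 1) :
    C (n + 1) k = C (n + 1) (k - 1) + C n (n + 1 - k) := by
  have hsplit := card_split
    (fun σ : Equiv.Perm (Fin (n + 2)) => IsDownUp σ ∧ ((σ 0 : Fin (n + 2)) : ℕ) = k)
    (fun σ => ((σ 1 : Fin (n + 2)) : ℕ) = k - 1)
  have hswap : Nat.card {σ : Equiv.Perm (Fin (n + 2)) //
      (IsDownUp σ ∧ ((σ 0 : Fin (n + 2)) : ℕ) = k) ∧ ¬(((σ 1 : Fin (n + 2)) : ℕ) = k - 1)} =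
      C (n + 1) (k - 1) :=
    Nat.card_congr (swapEquiv hk1 hk2)
  have hmaster := masterEquiv (n := n) (k := k) hk1 hk2
    (fun u => (u : ℕ) = k - 1) (fun w => (w : ℕ) = k - 1)
    (fun u hu => by
      show (u : ℕ) = k - 1 ↔ ((dd k hk2 u : Fin (n + 1)) : ℕ) = k - 1
      rw [dd_val]
      have := u.isLt
      split_ifs <;> omega)
    (fun w hw => by omega)
  have hrev := revEquiv (n := n) (k - 1) (by omega)
  have heq : n - (k - 1) = n + 1 - k := by omega
  rw [heq] at hrev
  have hfirst : Nat.card {σ : Equiv.Perm (Fin (n + 2)) //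
      (IsDownUp σ ∧ ((σ 0 : Fin (n + 2)) : ℕ) = k) ∧ (((σ 1 : Fin (n + 2)) : ℕ) = k - 1)} =
      C n (n + 1 - k) :=
    Nat.card_congr (hmaster.trans hrev)
  show Nat.card _ = _
  rw [hsplit, hswap, hfirst]
  ring

/-- If `E` satisfies the Entringer recurrence `E(0,0)=1`, `E(n,0)=0` for `n ≥ 1`, and
`E(n,k)=E(n,k−1)+E(n−1,n−k)` for `n ≥ 1`, `1 ≤ k ≤ n`, then the diagonal value
`E(n,n)` equals `A n`. -/
theorem entringer_diagonal (E : ℕ → ℕ → ℕ)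
    (h0 : E 0 0 = 1)
    (hb : ∀ n : ℕ, 1 ≤ n → E n 0 = 0)
    (hrec : ∀ n k : ℕ, 1 ≤ n → 1 ≤ k → k ≤ n → E n k = E n (k - 1) + E (n - 1) (n - k)) :
    ∀ n : ℕ, E n n = A n := by
  have key : ∀ n k : ℕ, k ≤ n → E n k = C n k := by
    intro n
    induction n with
    | zero =>
      intro k hk
      have hk0 : k = 0 := by omega
      subst hk0
      rw [h0, C_zero_eq_one]
    | succ n ih =>
      intro k
      induction k with
      | zero =>
        intro _
        rw [hb (n + 1) (by omega), C_succ_zero]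
      | succ k ihk =>
        intro hk
        have h1 := hrec (n + 1) (k + 1) (by omega) (by omega) (by omega)
        have h2 : (n + 1) - (k + 1) = n - k := by omega
        have h3 : (k + 1) - 1 = k := by omega
        have h4 : (n + 1) - 1 = n := by omega
        rw [h1, h2, h3, h4, ihk (by omega), ih (n - k) (by omega)]
        have h5 := C_rec n (k + 1) (by omega) (by omega)
        rw [h3] at h5
        have h6 : n + 1 - (k + 1) = n - k := by omega
        rw [h6] at h5
        omega
  intro n
  rw [key n n le_rfl, C_A]
end

section
/- Let f(x) = tan x + 1/cos x on (−π/2, π/2). Then for every natural number n and every real x with 0 ≤ x < π/2, the n-th derivative of f at x is nonnegative: f^{(n)}(x) ≥ 0. -/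
/-- Symbolic expressions built from `sec` and `tan` by `+` and `*`. -/
inductive SE : Type
  | s : SE
  | t : SE
  | add : SE → SE → SE
  | mul : SE → SE → SE

namespace SE

noncomputable def eval : SE → ℝ → ℝ
  | s => fun x => 1 / Real.cos x
  | t => Real.tan
  | add a b => fun x => a.eval x + b.eval x
  | mul a b => fun x => a.eval x * b.eval x

def D : SE → SE
  | s => mul s t
  | t => mul s s
  | add a b => add a.D b.D
  | mul a b => add (mul a.D b) (mul a b.D)

lemma hasDerivAt (e : SE) (x : ℝ) (hc : Real.cos x ≠ 0) :
    HasDerivAt e.eval (e.D.eval x) x := by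
  induction e with
  | s =>
      have h := (Real.hasDerivAt_cos x).inv hc
      have : HasDerivAt (fun y => (Real.cos y)⁻¹)
          ((1 / Real.cos x) * Real.tan x) x := by
        refine h.congr_deriv ?_
        rw [Real.tan_eq_sin_div_cos, neg_neg]
        rw [div_mul_div_comm, one_mul, sq]
      simpa [eval, D, one_div] using this
  | t =>
      have h := Real.hasDerivAt_tan hc
      have : (1 / Real.cos x ^ 2) = (1 / Real.cos x) * (1 / Real.cos x) := by
        field_simp
      simpa [eval, D, this] using h
  | add a b ha hb => exact (ha.add hb)
  | mul a b ha hb => exact (ha.mul hb)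

lemma eval_nonneg (e : SE) (x : ℝ) (hx0 : 0 ≤ x) (hx : x < Real.pi / 2) :
    0 ≤ e.eval x := by
  have hcos : 0 < Real.cos x := Real.cos_pos_of_mem_Ioo
    ⟨lt_of_lt_of_le (by linarith [Real.pi_pos]) hx0, hx⟩
  induction e with
  | s => exact le_of_lt (by simpa [eval] using (div_pos one_pos hcos))
  | t =>
      have : 0 ≤ Real.sin x := Real.sin_nonneg_of_nonneg_of_le_pi hx0
        (hx.le.trans (by linarith [Real.pi_pos]))
      simpa [eval, Real.tan_eq_sin_div_cos] using div_nonneg this hcos.le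
  | add a b ha hb => exact add_nonneg ha hb
  | mul a b ha hb => exact mul_nonneg ha hb

end SE

theorem iteratedDeriv_eqOn (n : ℕ) :
    Set.EqOn (iteratedDeriv n (fun y : ℝ => Real.tan y + 1 / Real.cos y))
      ((SE.D^[n] (SE.add SE.t SE.s)).eval)
      (Set.Ioo (-(Real.pi / 2)) (Real.pi / 2)) := by
  induction n with
  | zero =>
      intro x _
      simp [iteratedDeriv_zero, SE.eval]
  | succ n ih =>
      intro x hx
      have hc : Real.cos x ≠ 0 :=
        (Real.cos_pos_of_mem_Ioo hx).ne'
      have hopen : Set.Ioo (-(Real.pi / 2)) (Real.pi / 2) ∈ nhds x :=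
        (isOpen_Ioo).mem_nhds hx
      have heq : iteratedDeriv n (fun y : ℝ => Real.tan y + 1 / Real.cos y)
          =ᶠ[nhds x] (SE.D^[n] (SE.add SE.t SE.s)).eval :=
        Filter.eventuallyEq_of_mem hopen ih
      rw [iteratedDeriv_succ, heq.deriv_eq,
        ((SE.D^[n] (SE.add SE.t SE.s)).hasDerivAt x hc).deriv,
        Function.iterate_succ_apply']

/-- With `f x = tan x + 1/cos x`: for every `n` and every `x ∈ [0, π/2)`,
the `n`-th derivative of `f` at `x` is nonnegative. -/
theorem iteratedDeriv_nonneg (n : ℕ) (x : ℝ) (hx0 : 0 ≤ x) (hx : x < Real.pi / 2) :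
    0 ≤ iteratedDeriv n (fun y : ℝ => Real.tan y + 1 / Real.cos y) x := by
  have hx' : x ∈ Set.Ioo (-(Real.pi / 2)) (Real.pi / 2) :=
    ⟨lt_of_lt_of_le (by linarith [Real.pi_pos]) hx0, hx⟩
  rw [iteratedDeriv_eqOn n hx']
  exact SE.eval_nonneg _ x hx0 hx
end
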